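/- arXiv:math/0509029 — 15 statements merged into one kernel-verified Lean document; each statement's English description precedes it below -/
import Mathlib

section
/- If T is a bounded linear operator on a complex Hilbert space H, λ a nonzero complex number, r > 0, and ‖T − λI‖ ≤ r, then ‖T‖ − w(T) ≤ r²/(2|λ|). -/
noncomputable def numRadius {H : Type*} [NormedAddCommGroup H] [InnerProductSpace ℂ H]
    (T : H →L[ℂ] H) : ℝ :=
  sSup {r : ℝ | ∃ x : H, ‖x‖ = 1 ∧ r = ‖(inner ℂ (T x) x : ℂ)‖}

lemma numRadius_bddAbove {H : Type*} [NormedAddCommGroup H] [InnerProductSpace ℂ H]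
    (T : H →L[ℂ] H) :
    BddAbove {r : ℝ | ∃ x : H, ‖x‖ = 1 ∧ r = ‖(inner ℂ (T x) x : ℂ)‖} := by
  refine ⟨‖T‖, ?_⟩
  rintro s ⟨x, hx, rfl⟩
  have := norm_inner_le_norm (𝕜 := ℂ) (T x) x
  have h2 : ‖T x‖ ≤ ‖T‖ := by
    simpa [hx] using T.le_opNorm x
  calc ‖(inner ℂ (T x) x : ℂ)‖ = ‖(inner ℂ (T x) x : ℂ)‖ := rfl
    _ ≤ ‖T x‖ * ‖x‖ := this
    _ ≤ ‖T‖ := by simpa [hx] using h2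

lemma numRadius_nonneg {H : Type*} [NormedAddCommGroup H] [InnerProductSpace ℂ H]
    (T : H →L[ℂ] H) : 0 ≤ numRadius T := by
  rcases subsingleton_or_nontrivial H with hs | hn
  · have : {r : ℝ | ∃ x : H, ‖x‖ = 1 ∧ r = ‖(inner ℂ (T x) x : ℂ)‖} = ∅ := by
        ext s
        simp only [Set.mem_setOf_eq, Set.mem_empty_iff_false, iff_false, not_exists]
        intro x ⟨hx, _⟩
        have : x = 0 := Subsingleton.elim x 0
        simp [this] at hx
    simp [numRadius, this, Real.sSup_empty]
  · obtain ⟨z, hz⟩ := exists_ne (0 : H)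
    have hzn : 0 < ‖z‖ := norm_pos_iff.mpr hz
    set x := (‖z‖ : ℝ)⁻¹ • z with hxd
    have hx : ‖x‖ = 1 := by
      simp [hxd, norm_smul, abs_of_pos hzn, inv_mul_cancel₀ hzn.ne']
    have hmem : ‖(inner ℂ (T x) x : ℂ)‖ ∈
        {r : ℝ | ∃ x : H, ‖x‖ = 1 ∧ r = ‖(inner ℂ (T x) x : ℂ)‖} := ⟨x, hx, rfl⟩
    have := le_csSup (numRadius_bddAbove T) hmem
    exact le_trans (norm_nonneg _) this

theorem stmt_1 {H : Type*} [NormedAddCommGroup H] [InnerProductSpace ℂ H] [CompleteSpace H]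
    (T : H →L[ℂ] H) (lam : ℂ) (hlam : lam ≠ 0) (r : ℝ) (hr : 0 < r)
    (h : ‖T - lam • (1 : H →L[ℂ] H)‖ ≤ r) :
    ‖T‖ - numRadius T ≤ r ^ 2 / (2 * ‖lam‖) := by
  set m := ‖lam‖ with hm
  have hm0 : 0 < m := by simpa [hm] using norm_pos_iff.mpr hlam
  set w := numRadius T with hw
  have hw0 : 0 ≤ w := numRadius_nonneg T
  have hQ : 0 ≤ r ^ 2 / (2 * m) := by positivity
  have key : ‖T‖ ≤ w + r ^ 2 / (2 * m) := by
    refine T.opNorm_le_bound (by positivity) ?_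
    intro x
    rcases eq_or_ne x 0 with rfl | hx0
    · simp
    · have hxn : 0 < ‖x‖ := norm_pos_iff.mpr hx0
      set y := (‖x‖ : ℝ)⁻¹ • x with hy
      have hyn : ‖y‖ = 1 := by
        simp [hy, norm_smul, abs_of_pos hxn, inv_mul_cancel₀ hxn.ne']
      -- bound for the unit vector y
      have hwy : ‖(inner ℂ (T y) y : ℂ)‖ ≤ w := by
        exact le_csSup (numRadius_bddAbove T) ⟨y, hyn, rfl⟩
      have hsub : ‖T y - lam • y‖ ≤ r := by
        have := (T - lam • (1 : H →L[ℂ] H)).le_opNorm y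
        have h2 : ‖(T - lam • (1 : H →L[ℂ] H)) y‖ ≤ r := by
          calc ‖(T - lam • (1 : H →L[ℂ] H)) y‖ ≤ ‖T - lam • (1 : H →L[ℂ] H)‖ * ‖y‖ := this
            _ ≤ r := by simpa [hyn] using h
        simpa [ContinuousLinearMap.sub_apply, ContinuousLinearMap.smul_apply] using h2
      have hexp : ‖T y - lam • y‖ ^ 2
          = ‖T y‖ ^ 2 - 2 * Complex.re (inner ℂ (T y) (lam • y) : ℂ) + ‖lam • y‖ ^ 2 := by
        exact norm_sub_sq (𝕜 := ℂ) (T y) (lam • y)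
      have hre : Complex.re (inner ℂ (T y) (lam • y) : ℂ) ≤ m * w := by
        have h1 : (inner ℂ (T y) (lam • y) : ℂ) = lam * inner ℂ (T y) y := by
          simp [inner_smul_right]
        have h2 : Complex.re (lam * inner ℂ (T y) y) ≤ ‖lam * inner ℂ (T y) y‖ :=
          Complex.re_le_norm _
        have h3 : ‖lam * inner ℂ (T y) y‖ = m * ‖(inner ℂ (T y) y : ℂ)‖ := by
          simp [map_mul, hm]
        calc Complex.re (inner ℂ (T y) (lam • y) : ℂ)
            ≤ m * ‖(inner ℂ (T y) y : ℂ)‖ := by rw [h1]; rw [h3] at h2; exact h2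
          _ ≤ m * w := by nlinarith
      have hnl : ‖lam • y‖ = m := by simp [norm_smul, hyn, hm]
      have hsq : ‖T y‖ ^ 2 - 2 * (m * w) + m ^ 2 ≤ r ^ 2 := by
        have h4 : ‖T y - lam • y‖ ^ 2 ≤ r ^ 2 := by
          have := norm_nonneg (T y - lam • y)
          nlinarith
        rw [hexp, hnl] at h4
        nlinarith
      have hTy : ‖T y‖ ≤ w + r ^ 2 / (2 * m) := by
        rw [← sub_le_iff_le_add', le_div_iff₀ (by positivity : (0:ℝ) < 2 * m)]
        nlinarith [sq_nonneg (‖T y‖ - m)]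
      -- transfer back to x
      have hTyx : T y = (‖x‖ : ℝ)⁻¹ • T x := by simp [hy, map_smul]
      have : (‖x‖)⁻¹ * ‖T x‖ ≤ w + r ^ 2 / (2 * m) := by
        have := hTy
        rw [hTyx] at this
        simpa [norm_smul, abs_of_pos hxn] using this
      calc ‖T x‖ = ‖x‖ * ((‖x‖)⁻¹ * ‖T x‖) := by
            field_simp
          _ ≤ (w + r ^ 2 / (2 * m)) * ‖x‖ := by
            rw [mul_comm]
            exact mul_le_mul_of_nonneg_right this hxn.le
  linarith
end

section
/- Let A be a bounded linear operator on a complex Hilbert space H and φ, Φ ∈ ℂ with Φ ≠ −φ and Φ ≠ φ. If Re⟨Φx − Ax, Ax − φx⟩ ≥ 0 for all unit vectors x ∈ H, then ‖A‖ − w(A) ≤ |Φ − φ|²/(4|Φ + φ|). -/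
theorem stmt_3 {H : Type*} [NormedAddCommGroup H] [InnerProductSpace ℂ H] [CompleteSpace H]
    (A : H →L[ℂ] H) (phi Phi : ℂ) (h1 : Phi ≠ -phi) (h2 : Phi ≠ phi)
    (h : ∀ x : H, ‖x‖ = 1 → 0 ≤ (inner ℂ (Phi • x - A x) (A x - phi • x) : ℂ).re) :
    ‖A‖ - numRadius A ≤ ‖Phi - phi‖ ^ 2 / (4 * ‖Phi + phi‖) := by
  have hsum : Phi + phi ≠ 0 := fun hc => h1 (eq_neg_of_add_eq_zero_left hc)
  have hKpos : 0 < ‖Phi + phi‖ := norm_pos_iff.mpr hsum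
  have hRpos : 0 < ‖Phi - phi‖ := norm_pos_iff.mpr (sub_ne_zero.mpr h2)
  set K := ‖Phi + phi‖ with hK
  set R := ‖Phi - phi‖ with hR
  -- the identity K^2 - R^2 = 4 * Re(conj Phi * phi)
  have hid : K ^ 2 - R ^ 2 = 4 * ((starRingEnd ℂ) Phi * phi).re := by
    simp only [hK, hR, Complex.sq_norm]
    simp [Complex.normSq_apply, Complex.mul_re, Complex.conj_re, Complex.conj_im]
    ring
  by_cases hne : ∃ x : H, ‖x‖ = 1
  · obtain ⟨x₀, hx₀⟩ := hne
    set S := {r : ℝ | ∃ x : H, ‖x‖ = 1 ∧ r = ‖(inner ℂ (A x) x : ℂ)‖} with hS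
    have hbdd : BddAbove S := by
      refine ⟨‖A‖, ?_⟩
      rintro r ⟨x, hx, rfl⟩
      calc ‖(inner ℂ (A x) x : ℂ)‖ = ‖(inner ℂ (A x) x : ℂ)‖ := rfl
        _ ≤ ‖A x‖ * ‖x‖ := norm_inner_le_norm _ _
        _ ≤ ‖A‖ * ‖x‖ * ‖x‖ := by gcongr; exact A.le_opNorm x
        _ = ‖A‖ := by rw [hx]; ring
    set w := numRadius A with hw
    have hwge : ∀ x : H, ‖x‖ = 1 → ‖(inner ℂ (A x) x : ℂ)‖ ≤ w :=
      fun x hx => le_csSup hbdd ⟨x, hx, rfl⟩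
    have hwnn : 0 ≤ w := le_trans (norm_nonneg _) (hwge x₀ hx₀)
    -- key pointwise bound
    have key : ∀ x : H, ‖x‖ = 1 →
        ‖A x‖ ^ 2 ≤ K * w - ((starRingEnd ℂ) Phi * phi).re := by
      intro x hx
      have hx1 : (inner ℂ x x : ℂ) = 1 := by
        rw [inner_self_eq_norm_sq_to_K, hx]; norm_num
      set t : ℂ := inner ℂ (A x) x with ht
      have hAA : (inner ℂ (A x) (A x) : ℂ) = (‖A x‖ : ℂ) ^ 2 :=
        inner_self_eq_norm_sq_to_K (𝕜 := ℂ) (A x)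
      have hconj : (inner ℂ x (A x) : ℂ) = (starRingEnd ℂ) t := (inner_conj_symm _ _).symm
      have hexp : (inner ℂ (Phi • x - A x) (A x - phi • x) : ℂ)
          = (starRingEnd ℂ) Phi * (starRingEnd ℂ) t + phi * t
            - (starRingEnd ℂ) Phi * phi - (‖A x‖ : ℂ) ^ 2 := by
        rw [inner_sub_left, inner_sub_right, inner_sub_right, inner_smul_left,
          inner_smul_left, inner_smul_right, inner_smul_right, hx1, hAA, hconj]
        ring
      have h0 := h x hx
      rw [hexp] at h0
      have hre : ((starRingEnd ℂ) Phi * (starRingEnd ℂ) t + phi * t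
            - (starRingEnd ℂ) Phi * phi - (‖A x‖ : ℂ) ^ 2).re
          = ((Phi + phi) * t).re - ((starRingEnd ℂ) Phi * phi).re - ‖A x‖ ^ 2 := by
        simp [Complex.mul_re, Complex.conj_re, Complex.conj_im, Complex.add_re,
          Complex.sub_re, ← Complex.ofReal_pow, Complex.ofReal_re]
        ring
      rw [hre] at h0
      have habs : ((Phi + phi) * t).re ≤ K * w := by
        calc ((Phi + phi) * t).re ≤ ‖(Phi + phi) * t‖ := Complex.re_le_norm _
          _ = K * ‖t‖ := by rw [norm_mul]
          _ ≤ K * w := by exact mul_le_mul_of_nonneg_left (hwge x hx) hKpos.le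
      linarith
    have hCnn : 0 ≤ K * w - ((starRingEnd ℂ) Phi * phi).re :=
      le_trans (sq_nonneg _) (key x₀ hx₀)
    set C := K * w - ((starRingEnd ℂ) Phi * phi).re with hC
    have hAle : ‖A‖ ≤ Real.sqrt C := by
      refine A.opNorm_le_bound (Real.sqrt_nonneg _) (fun x => ?_)
      rcases eq_or_ne x 0 with rfl | hx0
      · simp
      · have hnx : ‖x‖ ≠ 0 := norm_ne_zero_iff.mpr hx0
        set u := (‖x‖ : ℝ)⁻¹ • x with hu
        have hu1 : ‖u‖ = 1 := by
          rw [hu, norm_smul, norm_inv, norm_norm, inv_mul_cancel₀ hnx]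
        have h2 : ‖A u‖ ^ 2 ≤ C := key u hu1
        have h3 : ‖A u‖ ≤ Real.sqrt C := by
          rw [← Real.sqrt_sq (norm_nonneg (A u))]
          exact Real.sqrt_le_sqrt h2
        have h4 : A x = ‖x‖ • A u := by
          rw [hu, A.map_smul_of_tower, smul_smul, mul_inv_cancel₀ hnx, one_smul]
        rw [h4, norm_smul, norm_norm, mul_comm]
        exact mul_le_mul_of_nonneg_right h3 (norm_nonneg x)
    have hA2 : ‖A‖ ^ 2 ≤ C := by
      have := pow_le_pow_left₀ (norm_nonneg A) hAle 2
      rwa [Real.sq_sqrt hCnn] at this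
    have hamgm : K * ‖A‖ ≤ ‖A‖ ^ 2 + K ^ 2 / 4 := by nlinarith [sq_nonneg (‖A‖ - K / 2)]
    rw [le_div_iff₀ (by positivity : (0:ℝ) < 4 * K)]
    nlinarith [hamgm, hA2, hid, hC]
  · -- no unit vectors: A = 0 and numRadius = 0
    have hA0 : ‖A‖ = 0 := by
      refine le_antisymm (A.opNorm_le_bound le_rfl fun x => ?_) (norm_nonneg _)
      rcases eq_or_ne x 0 with rfl | hx0
      · simp
      · exact absurd ⟨(‖x‖ : ℝ)⁻¹ • x, by
          rw [norm_smul, norm_inv, norm_norm, inv_mul_cancel₀ (norm_ne_zero_iff.mpr hx0)]⟩ hne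
    have hS0 : {r : ℝ | ∃ x : H, ‖x‖ = 1 ∧ r = ‖(inner ℂ (A x) x : ℂ)‖} = ∅ := by
      ext r
      simp only [Set.mem_setOf_eq, Set.mem_empty_iff_false, iff_false]
      rintro ⟨x, hx, -⟩
      exact hne ⟨x, hx⟩
    have hw0 : numRadius A = 0 := by rw [numRadius, hS0, Real.sSup_empty]
    rw [hw0, hA0, sub_zero]
    positivity
end

section
/- Let A be a bounded linear operator on a complex Hilbert space and φ, Φ ∈ ℂ with Φ ≠ −φ, Φ ≠ φ. If Re⟨Φx − Ax, Ax − φx⟩ ≥ 0 for all unit vectors x, then ‖A − ((Φ + φ)/2)·I‖ ≤ |Φ − φ|/2. -/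
theorem stmt_5 {H : Type*} [NormedAddCommGroup H] [InnerProductSpace ℂ H] [CompleteSpace H]
    (A : H →L[ℂ] H) (phi Phi : ℂ) (h1 : Phi ≠ -phi) (h2 : Phi ≠ phi)
    (h : ∀ x : H, ‖x‖ = 1 → 0 ≤ (inner ℂ (Phi • x - A x) (A x - phi • x) : ℂ).re) :
    ‖A - ((Phi + phi) / 2) • (1 : H →L[ℂ] H)‖ ≤ ‖Phi - phi‖ / 2 := by
  set c := (Phi + phi) / 2 with hc
  set d := (Phi - phi) / 2 with hd
  have habs : ‖Phi - phi‖ / 2 = ‖d‖ := by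
    rw [hd, norm_div]; simp
  have key : ∀ x : H, ‖x‖ = 1 → ‖A x - c • x‖ ≤ ‖d‖ := by
    intro x hx
    have hh := h x hx
    set y := A x - c • x with hy
    have e1 : Phi • x - A x = d • x - y := by
      rw [hy]; rw [show Phi = d + c by rw [hd, hc]; ring]; module
    have e2 : A x - phi • x = y + d • x := by
      rw [hy]; rw [show phi = c - d by rw [hd, hc]; ring]; module
    rw [e1, e2] at hh
    have hx2 : (inner ℂ x x : ℂ) = 1 := by
      rw [inner_self_eq_norm_sq_to_K, hx]; norm_num
    have expand : (inner ℂ (d • x - y) (y + d • x) : ℂ)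
        = (starRingEnd ℂ) d * inner ℂ x y + (starRingEnd ℂ) d * d * inner ℂ x x
          - inner ℂ y y - d * inner ℂ y x := by
      simp [inner_sub_left, inner_add_right, inner_smul_left, inner_smul_right]
      ring
    rw [expand, hx2] at hh
    have hyy : (inner ℂ y y : ℂ) = (‖y‖ : ℂ) ^ 2 := by
      rw [inner_self_eq_norm_sq_to_K]; norm_num
    have hconj : ((starRingEnd ℂ) d * inner ℂ x y).re = (d * (inner ℂ y x : ℂ)).re := by
      have : (d * (inner ℂ y x : ℂ)) = (starRingEnd ℂ) ((starRingEnd ℂ) d * inner ℂ x y) := by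
        rw [map_mul]; simp [inner_conj_symm]
      rw [this, Complex.conj_re]
    have habs2 : ((starRingEnd ℂ) d * d * 1).re = ‖d‖ ^ 2 := by
      rw [mul_one, mul_comm, Complex.mul_conj, ← Complex.sq_norm, Complex.ofReal_re]
    rw [hyy] at hh
    simp only [Complex.sub_re, Complex.add_re, habs2, hconj] at hh
    have hre : (((‖y‖ : ℂ)) ^ 2).re = ‖y‖ ^ 2 := by
      rw [← Complex.ofReal_pow, Complex.ofReal_re]
    rw [hre] at hh
    nlinarith [norm_nonneg y, norm_nonneg d]
  rw [habs]
  apply ContinuousLinearMap.opNorm_le_bound _ (norm_nonneg d)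
  intro x
  rcases eq_or_ne x 0 with rfl | hx0
  · simp
  · have hn : ‖x‖ ≠ 0 := norm_ne_zero_iff.mpr hx0
    have hu : ‖(((‖x‖ : ℂ))⁻¹ • x)‖ = 1 := by
      rw [norm_smul]
      simp [inv_mul_cancel₀ hn]
    have := key (((‖x‖ : ℂ))⁻¹ • x) hu
    have heq : A (((‖x‖ : ℂ))⁻¹ • x) - c • (((‖x‖ : ℂ))⁻¹ • x)
        = ((‖x‖ : ℂ))⁻¹ • (A x - c • x) := by
      rw [map_smul]; module
    rw [heq, norm_smul] at this
    have hAc : (A - c • (1 : H →L[ℂ] H)) x = A x - c • x := by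
      simp
    rw [hAc]
    have : ‖x‖⁻¹ * ‖A x - c • x‖ ≤ ‖d‖ := by
      simpa using this
    calc ‖A x - c • x‖ = ‖x‖ * (‖x‖⁻¹ * ‖A x - c • x‖) := by
          field_simp
      _ ≤ ‖x‖ * ‖d‖ := by
          exact mul_le_mul_of_nonneg_left this (norm_nonneg x)
      _ = ‖d‖ * ‖x‖ := mul_comm _ _
end

section
/- If T is a bounded linear operator on a complex Hilbert space, λ ∈ ℂ, r > 0, ‖T − λI‖ ≤ r and |λ| = w(T), then ‖T‖² − w(T)² ≤ r². -/
lemma abs_inner_le_numRadius {H : Type*} [NormedAddCommGroup H] [InnerProductSpace ℂ H]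
    (T : H →L[ℂ] H) (x : H) :
    ‖(inner ℂ (T x) x : ℂ)‖ ≤ numRadius T * ‖x‖ ^ 2 := by
  rcases eq_or_ne x 0 with rfl | hx
  · simp
  · have hn : (0:ℝ) < ‖x‖ := norm_pos_iff.mpr hx
    set u : H := (‖x‖⁻¹ : ℂ) • x with hu
    have hun : ‖u‖ = 1 := by
      simp [hu, norm_smul, abs_of_pos hn, inv_mul_cancel₀ hn.ne']
    have hmem : ‖(inner ℂ (T u) u : ℂ)‖ ∈
        {r : ℝ | ∃ y : H, ‖y‖ = 1 ∧ r = ‖(inner ℂ (T y) y : ℂ)‖} :=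
      ⟨u, hun, rfl⟩
    have hle : ‖(inner ℂ (T u) u : ℂ)‖ ≤ numRadius T :=
      le_csSup (numRadius_bddAbove T) hmem
    have hval : ‖(inner ℂ (T u) u : ℂ)‖
        = ‖x‖⁻¹ * ‖x‖⁻¹ * ‖(inner ℂ (T x) x : ℂ)‖ := by
      simp [hu, map_smul, inner_smul_left, inner_smul_right, map_mul, mul_assoc,
        Complex.norm_conj, mul_comm]
    have := mul_le_mul_of_nonneg_right hle (by positivity : (0:ℝ) ≤ ‖x‖ ^ 2)
    rw [hval] at this
    have hc : ‖x‖⁻¹ * ‖x‖ = 1 := inv_mul_cancel₀ hn.ne'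
    calc ‖(inner ℂ (T x) x : ℂ)‖
        = (‖x‖⁻¹ * ‖x‖⁻¹ * ‖(inner ℂ (T x) x : ℂ)‖) * ‖x‖ ^ 2 := by
          have : (‖x‖⁻¹ * ‖x‖⁻¹ * ‖(inner ℂ (T x) x : ℂ)‖) * ‖x‖ ^ 2
              = ‖(inner ℂ (T x) x : ℂ)‖ * (‖x‖⁻¹ * ‖x‖) ^ 2 := by ring
          rw [this, hc]; ring
      _ ≤ numRadius T * ‖x‖ ^ 2 := this

theorem stmt_7 {H : Type*} [NormedAddCommGroup H] [InnerProductSpace ℂ H] [CompleteSpace H]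
    (T : H →L[ℂ] H) (lam : ℂ) (r : ℝ) (hr : 0 < r)
    (h : ‖T - lam • (1 : H →L[ℂ] H)‖ ≤ r) (heq : ‖lam‖ = numRadius T) :
    ‖T‖ ^ 2 - numRadius T ^ 2 ≤ r ^ 2 := by
  set w := numRadius T with hw
  have hw0 : 0 ≤ w := heq ▸ norm_nonneg lam
  -- key: ‖T‖ ≤ sqrt (r^2 + w^2)
  have hkey : ‖T‖ ≤ Real.sqrt (r ^ 2 + w ^ 2) := by
    refine T.opNorm_le_bound (Real.sqrt_nonneg _) fun x => ?_
    have hSx : ‖T x - lam • x‖ ≤ r * ‖x‖ := by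
      have := (T - lam • (1 : H →L[ℂ] H)).le_opNorm x
      simp only [ContinuousLinearMap.sub_apply, ContinuousLinearMap.smul_apply,
        ContinuousLinearMap.one_apply] at this
      exact this.trans (by gcongr)
    have hinner : ‖(inner ℂ (T x) x : ℂ)‖ ≤ w * ‖x‖ ^ 2 :=
      abs_inner_le_numRadius T x
    have hsq : ‖T x‖ ^ 2 ≤ (r ^ 2 + w ^ 2) * ‖x‖ ^ 2 := by
      have expand : ‖T x‖ ^ 2 = ‖T x - lam • x‖ ^ 2
          + 2 * Complex.re (lam * (inner ℂ (T x) x : ℂ)) - ‖lam‖ ^ 2 * ‖x‖ ^ 2 := by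
        have h1 : T x = (T x - lam • x) + lam • x := by abel
        have h2 : (inner ℂ (T x - lam • x) (lam • x) : ℂ)
            = lam * (inner ℂ (T x) x : ℂ) - lam * (starRingEnd ℂ) lam * (inner ℂ x x : ℂ) := by
          rw [inner_smul_right, inner_sub_left, inner_smul_left]; ring
        have h3 : lam * (starRingEnd ℂ) lam = (‖lam‖ ^ 2 : ℝ) := by
          rw [Complex.mul_conj, Complex.sq_norm]
        have h4 : (inner ℂ x x : ℂ) = (‖x‖ ^ 2 : ℝ) := by
          rw [inner_self_eq_norm_sq_to_K]; norm_cast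
        calc ‖T x‖ ^ 2 = ‖(T x - lam • x) + lam • x‖ ^ 2 := by rw [← h1]
          _ = ‖T x - lam • x‖ ^ 2 + 2 * Complex.re (inner ℂ (T x - lam • x) (lam • x) : ℂ)
              + ‖lam • x‖ ^ 2 := @norm_add_sq ℂ _ _ _ _ _ _
          _ = _ := by
              rw [h2, h3, h4, norm_smul]
              simp only [Complex.sub_re, Complex.mul_re, Complex.ofReal_re, Complex.ofReal_im]
              ring
      have hre : Complex.re (lam * (inner ℂ (T x) x : ℂ)) ≤ w ^ 2 * ‖x‖ ^ 2 := by
        calc Complex.re (lam * (inner ℂ (T x) x : ℂ))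
            ≤ ‖lam * (inner ℂ (T x) x : ℂ)‖ := Complex.re_le_norm _
          _ = ‖lam‖ * ‖(inner ℂ (T x) x : ℂ)‖ := norm_mul _ _
          _ ≤ w * (w * ‖x‖ ^ 2) := by
              rw [heq]; exact mul_le_mul_of_nonneg_left hinner hw0
          _ = w ^ 2 * ‖x‖ ^ 2 := by ring
      have hSsq : ‖T x - lam • x‖ ^ 2 ≤ r ^ 2 * ‖x‖ ^ 2 := by
        have := mul_self_le_mul_self (norm_nonneg _) hSx
        calc ‖T x - lam • x‖ ^ 2 = ‖T x - lam • x‖ * ‖T x - lam • x‖ := sq _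
          _ ≤ (r * ‖x‖) * (r * ‖x‖) := this
          _ = r ^ 2 * ‖x‖ ^ 2 := by ring
      rw [expand, heq]
      nlinarith
    calc ‖T x‖ = Real.sqrt (‖T x‖ ^ 2) := (Real.sqrt_sq (norm_nonneg _)).symm
      _ ≤ Real.sqrt ((r ^ 2 + w ^ 2) * ‖x‖ ^ 2) := Real.sqrt_le_sqrt hsq
      _ = Real.sqrt (r ^ 2 + w ^ 2) * ‖x‖ := by
          rw [Real.sqrt_mul (by positivity), Real.sqrt_sq (norm_nonneg _)]
  have : ‖T‖ ^ 2 ≤ r ^ 2 + w ^ 2 := by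
    have h2 := mul_self_le_mul_self (norm_nonneg T) hkey
    have h3 : Real.sqrt (r ^ 2 + w ^ 2) * Real.sqrt (r ^ 2 + w ^ 2) = r ^ 2 + w ^ 2 :=
      Real.mul_self_sqrt (by positivity)
    nlinarith
  linarith
end

section
/- Let T be a nonzero bounded linear operator on a complex Hilbert space, λ ∈ ℂ nonzero, r > 0 with |λ| > r. If ‖T − λI‖ ≤ r, then sqrt(1 − r²/|λ|²) · ‖T‖ ≤ w(T). -/
open scoped InnerProductSpace

theorem stmt_8 {H : Type*} [NormedAddCommGroup H] [InnerProductSpace ℂ H] [CompleteSpace H]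
    (T : H →L[ℂ] H) (hT : T ≠ 0) (lam : ℂ) (hlam : lam ≠ 0) (r : ℝ) (hr : 0 < r)
    (hlr : r < ‖lam‖) (h : ‖T - lam • (1 : H →L[ℂ] H)‖ ≤ r) :
    Real.sqrt (1 - r ^ 2 / ‖lam‖ ^ 2) * ‖T‖ ≤ numRadius T := by
  set a := ‖lam‖ with ha
  have ha0 : 0 < a := lt_trans hr hlr
  set S := {s : ℝ | ∃ x : H, ‖x‖ = 1 ∧ s = ‖(inner ℂ (T x) x : ℂ)‖} with hS
  have hbdd : BddAbove S := by
    refine ⟨‖T‖, ?_⟩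
    rintro s ⟨x, hx, rfl⟩
    calc ‖(inner ℂ (T x) x : ℂ)‖ ≤ ‖T x‖ * ‖x‖ := by
          simpa using norm_inner_le_norm (𝕜 := ℂ) (T x) x
      _ ≤ ‖T‖ * ‖x‖ * ‖x‖ := by gcongr; exact T.le_opNorm x
      _ = ‖T‖ := by rw [hx]; ring
  -- pointwise key inequality
  have key : ∀ x : H, ‖x‖ = 1 →
      Real.sqrt (a ^ 2 - r ^ 2) * ‖T x‖ ≤ a * ‖(inner ℂ (T x) x : ℂ)‖ := by
    intro x hx
    have h1 : ‖T x - lam • x‖ ≤ r := by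
      have h2 := (T - lam • (1 : H →L[ℂ] H)).le_opNorm x
      simp only [ContinuousLinearMap.sub_apply, ContinuousLinearMap.smul_apply,
        ContinuousLinearMap.one_apply, hx, mul_one] at h2
      exact h2.trans h
    have h2 : ‖T x - lam • x‖ ^ 2 = ‖T x‖ ^ 2 - 2 * Complex.re ⟪T x, lam • x⟫_ℂ + ‖lam • x‖ ^ 2 :=
      norm_sub_sq (𝕜 := ℂ) _ _
    have h3 : Complex.re ⟪T x, lam • x⟫_ℂ ≤ a * ‖(inner ℂ (T x) x : ℂ)‖ := by
      rw [inner_smul_right]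
      calc (lam * ⟪T x, x⟫_ℂ).re ≤ ‖lam * ⟪T x, x⟫_ℂ‖ := Complex.re_le_norm _
        _ = a * ‖(inner ℂ (T x) x : ℂ)‖ := by rw [norm_mul]
    have h4 : ‖lam • x‖ = a := by
      rw [norm_smul, hx, mul_one]
    have h5 : ‖T x‖ ^ 2 + a ^ 2 - r ^ 2 ≤ 2 * (a * ‖(inner ℂ (T x) x : ℂ)‖) := by
      have h6 : ‖T x - lam • x‖ ^ 2 ≤ r ^ 2 := by
        have := norm_nonneg (T x - lam • x)
        nlinarith
      rw [h2, h4] at h6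
      nlinarith
    have hs : Real.sqrt (a ^ 2 - r ^ 2) ^ 2 = a ^ 2 - r ^ 2 :=
      Real.sq_sqrt (by nlinarith)
    nlinarith [sq_nonneg (‖T x‖ - Real.sqrt (a ^ 2 - r ^ 2)),
      Real.sqrt_nonneg (a ^ 2 - r ^ 2), norm_nonneg (T x)]
  have heq : Real.sqrt (1 - r ^ 2 / a ^ 2) = Real.sqrt (a ^ 2 - r ^ 2) / a := by
    rw [show (1 - r ^ 2 / a ^ 2) = (a ^ 2 - r ^ 2) / a ^ 2 by field_simp,
      Real.sqrt_div (by nlinarith), Real.sqrt_sq ha0.le]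
  set c := Real.sqrt (a ^ 2 - r ^ 2) / a with hc
  have hc0 : 0 < c := div_pos (Real.sqrt_pos.mpr (by nlinarith)) ha0
  -- sSup S is nonneg and bounds each |⟨Tx,x⟩|
  have hmem : ∀ x : H, ‖x‖ = 1 → ‖(inner ℂ (T x) x : ℂ)‖ ≤ sSup S :=
    fun x hx => le_csSup hbdd ⟨x, hx, rfl⟩
  have hTnorm : ‖T‖ ≤ sSup S / c := by
    -- need sSup S / c ≥ 0: get a unit vector
    obtain ⟨y, hy⟩ : ∃ y : H, T y ≠ 0 := by
      by_contra hcon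
      push_neg at hcon
      exact hT (ContinuousLinearMap.ext fun y => by simp [hcon y])
    have hy0 : y ≠ 0 := fun h0 => hy (by simp [h0])
    have hny : ‖y‖ ≠ 0 := norm_ne_zero_iff.mpr hy0
    have hSnn : (0 : ℝ) ≤ sSup S := by
      refine le_trans (norm_nonneg _) (hmem ((‖y‖⁻¹ : ℂ) • y) ?_)
      rw [norm_smul]
      simp [hny, abs_of_nonneg (inv_nonneg.mpr (norm_nonneg y))]
    refine T.opNorm_le_bound (div_nonneg hSnn hc0.le) fun x => ?_
    rcases eq_or_ne x 0 with rfl | hx0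
    · simp
    have hnx : ‖x‖ ≠ 0 := norm_ne_zero_iff.mpr hx0
    set u : H := (‖x‖⁻¹ : ℂ) • x with hu
    have hu1 : ‖u‖ = 1 := by
      rw [hu, norm_smul]
      simp [hnx, abs_of_nonneg (inv_nonneg.mpr (norm_nonneg x))]
    have hTu : ‖T u‖ = ‖x‖⁻¹ * ‖T x‖ := by
      rw [hu, map_smul, norm_smul]
      simp [abs_of_nonneg (inv_nonneg.mpr (norm_nonneg x))]
    have hk := key u hu1
    have hk2 : c * ‖T u‖ ≤ ‖(inner ℂ (T u) u : ℂ)‖ := by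
      rw [hc, div_mul_eq_mul_div, div_le_iff₀ ha0] at *
      nlinarith [hk]
    have : c * ‖T u‖ ≤ sSup S := hk2.trans (hmem u hu1)
    rw [hTu] at this
    calc ‖T x‖ = ((c * (‖x‖⁻¹ * ‖T x‖)) / c) * ‖x‖ := by field_simp
      _ ≤ (sSup S / c) * ‖x‖ := by gcongr
  show Real.sqrt (1 - r ^ 2 / a ^ 2) * ‖T‖ ≤ sSup S
  rw [heq]
  calc Real.sqrt (a ^ 2 - r ^ 2) / a * ‖T‖ = c * ‖T‖ := by rw [hc]
    _ ≤ c * (sSup S / c) := by gcongr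
    _ = sSup S := by field_simp
end

section
/- Let T be a nonzero bounded linear operator on a complex Hilbert space, λ ∈ ℂ nonzero, r > 0 with |λ| > r and ‖T − λI‖ ≤ r. Then ‖T‖² − w(T)² ≤ (r²/|λ|²)·‖T‖². -/
theorem stmt_9 {H : Type*} [NormedAddCommGroup H] [InnerProductSpace ℂ H] [CompleteSpace H]
    (T : H →L[ℂ] H) (hT : T ≠ 0) (lam : ℂ) (hlam : lam ≠ 0) (r : ℝ) (hr : 0 < r)
    (hlr : r < ‖lam‖) (h : ‖T - lam • (1 : H →L[ℂ] H)‖ ≤ r) :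
    ‖T‖ ^ 2 - numRadius T ^ 2 ≤ (r ^ 2 / ‖lam‖ ^ 2) * ‖T‖ ^ 2 := by
  set a := ‖lam‖ with ha_def
  have ha : 0 < a := hr.trans hlr
  set S : Set ℝ := {s : ℝ | ∃ x : H, ‖x‖ = 1 ∧ s = ‖(inner ℂ (T x) x : ℂ)‖} with hS_def
  set w : ℝ := numRadius T with hw_def
  have hwS : w = sSup S := rfl
  -- a unit vector exists
  obtain ⟨x0, hx0⟩ : ∃ x : H, T x ≠ 0 := by
    by_contra hc
    push_neg at hc
    exact hT (ContinuousLinearMap.ext fun x => by simp [hc x])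
  have hx0ne : x0 ≠ 0 := fun h0 => hx0 (by simp [h0])
  set e : H := ‖x0‖⁻¹ • x0 with he_def
  have he : ‖e‖ = 1 := by
    rw [he_def, norm_smul, norm_inv, norm_norm]
    field_simp [norm_ne_zero_iff.mpr hx0ne]
  have hSne : S.Nonempty := ⟨_, e, he, rfl⟩
  have hSbdd : BddAbove S := by
    refine ⟨‖T‖, ?_⟩
    rintro s ⟨x, hx, rfl⟩
    calc ‖(inner ℂ (T x) x : ℂ)‖ = ‖(inner ℂ (T x) x : ℂ)‖ := rfl
      _ ≤ ‖T x‖ * ‖x‖ := norm_inner_le_norm _ _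
      _ ≤ (‖T‖ * ‖x‖) * ‖x‖ := by
          exact mul_le_mul_of_nonneg_right (T.le_opNorm x) (norm_nonneg x)
      _ = ‖T‖ := by rw [hx]; ring
  have hw0 : 0 ≤ w := by
    have := le_csSup hSbdd (⟨e, he, rfl⟩ : (‖(inner ℂ (T e) e : ℂ)‖) ∈ S)
    exact le_trans (norm_nonneg _) this
  -- key inequality for unit vectors
  have key : ∀ x : H, ‖x‖ = 1 → ‖T x‖ ^ 2 + a ^ 2 - r ^ 2 ≤ 2 * a * w := by
    intro x hx
    have h1 : ‖T x - lam • x‖ ≤ r := by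
      have : (T - lam • (1 : H →L[ℂ] H)) x = T x - lam • x := by
        simp [ContinuousLinearMap.sub_apply, ContinuousLinearMap.smul_apply]
      calc ‖T x - lam • x‖ = ‖(T - lam • (1 : H →L[ℂ] H)) x‖ := by rw [this]
        _ ≤ ‖T - lam • (1 : H →L[ℂ] H)‖ * ‖x‖ := ContinuousLinearMap.le_opNorm _ x
        _ ≤ r := by rw [hx, mul_one]; exact h
    have h2 : ‖T x - lam • x‖ ^ 2 ≤ r ^ 2 :=
      pow_le_pow_left₀ (norm_nonneg _) h1 2
    have h3 : ‖T x - lam • x‖ ^ 2 =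
        ‖T x‖ ^ 2 - 2 * Complex.re (lam * (inner ℂ (T x) x : ℂ)) + a ^ 2 := by
      rw [@norm_sub_sq ℂ, inner_smul_right, norm_smul]
      simp only [← ha_def, hx, mul_one]
      ring_nf
      simp [Complex.smul_re]
      ring
    have h4 : Complex.re (lam * (inner ℂ (T x) x : ℂ)) ≤
        a * ‖(inner ℂ (T x) x : ℂ)‖ := by
      calc Complex.re (lam * (inner ℂ (T x) x : ℂ)) ≤ ‖(lam * (inner ℂ (T x) x : ℂ))‖ :=
            Complex.re_le_norm _
        _ = a * ‖(inner ℂ (T x) x : ℂ)‖ := by rw [norm_mul]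
    have h5 : ‖(inner ℂ (T x) x : ℂ)‖ ≤ w :=
      le_csSup hSbdd ⟨x, hx, rfl⟩
    nlinarith [norm_nonneg (inner ℂ (T x) x : ℂ)]
  -- bound the operator norm
  set K : ℝ := 2 * a * w + r ^ 2 - a ^ 2 with hK_def
  have hK0 : 0 ≤ K := by
    have := key e he
    nlinarith [sq_nonneg ‖T e‖]
  have hTnorm : ‖T‖ ^ 2 ≤ K := by
    have hle : ‖T‖ ≤ Real.sqrt K := by
      refine T.opNorm_le_bound (Real.sqrt_nonneg K) fun x => ?_
      rcases eq_or_ne x 0 with rfl | hx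
      · simp
      · have hxn : (0:ℝ) < ‖x‖ := norm_pos_iff.mpr hx
        set u : H := ‖x‖⁻¹ • x with hu_def
        have hu : ‖u‖ = 1 := by
          rw [hu_def, norm_smul, norm_inv, norm_norm]
          field_simp
        have hTu : ‖T u‖ ^ 2 ≤ K := by
          have := key u hu
          nlinarith
        have hTu' : ‖T u‖ ≤ Real.sqrt K := by
          have := Real.sqrt_le_sqrt hTu
          rwa [Real.sqrt_sq (norm_nonneg _)] at this
        have hTuval : ‖T u‖ = ‖x‖⁻¹ * ‖T x‖ := by
          have : T u = ‖x‖⁻¹ • T x := by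
            rw [hu_def]; exact T.map_smul_of_tower _ _
          rw [this, norm_smul, norm_inv, norm_norm]
        rw [hTuval] at hTu'
        calc ‖T x‖ = ‖x‖ * (‖x‖⁻¹ * ‖T x‖) := by field_simp
          _ ≤ ‖x‖ * Real.sqrt K := by
              exact mul_le_mul_of_nonneg_left hTu' (norm_nonneg x)
          _ = Real.sqrt K * ‖x‖ := mul_comm _ _
    calc ‖T‖ ^ 2 ≤ Real.sqrt K ^ 2 := pow_le_pow_left₀ (norm_nonneg _) hle 2
      _ = K := Real.sq_sqrt hK0
  -- finish
  have ha2 : (0:ℝ) < a ^ 2 := by positivity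
  have hq : r ^ 2 / a ^ 2 * a ^ 2 = r ^ 2 := div_mul_cancel₀ _ (ne_of_gt ha2)
  have ht0 : (0:ℝ) ≤ ‖T‖ ^ 2 := sq_nonneg _
  have h8 : ‖T‖ ^ 2 + (a ^ 2 - r ^ 2) ≤ 2 * a * w := by
    rw [hK_def] at hTnorm; linarith
  have h7 : (‖T‖ ^ 2 + (a ^ 2 - r ^ 2)) ^ 2 ≤ (2 * a * w) ^ 2 := by
    apply pow_le_pow_left₀ (by nlinarith) h8
  have h9 : ‖T‖ ^ 2 * (a ^ 2 - r ^ 2) ≤ a ^ 2 * w ^ 2 := by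
    nlinarith [sq_nonneg (‖T‖ ^ 2 - (a ^ 2 - r ^ 2))]
  rw [div_mul_eq_mul_div, le_div_iff₀ ha2]
  nlinarith [h9]
end

section
/- Let φ, Φ ∈ ℂ with Re(Φ·conj(φ)) > 0 and T a bounded linear operator on a complex Hilbert space with Re⟨Φx − Tx, Tx − φx⟩ ≥ 0 for all unit vectors x. Then ‖T‖² − w(T)² ≤ |(Φ − φ)/(Φ + φ)|²·‖T‖². -/
theorem stmt_11 {H : Type*} [NormedAddCommGroup H] [InnerProductSpace ℂ H] [CompleteSpace H]
    (T : H →L[ℂ] H) (phi Phi : ℂ) (hre : 0 < (Phi * starRingEnd ℂ phi).re)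
    (h : ∀ x : H, ‖x‖ = 1 → 0 ≤ (inner ℂ (Phi • x - T x) (T x - phi • x) : ℂ).re) :
    ‖T‖ ^ 2 - numRadius T ^ 2 ≤
      ‖(Phi - phi) / (Phi + phi)‖ ^ 2 * ‖T‖ ^ 2 := by
  set S : Set ℝ := {r : ℝ | ∃ x : H, ‖x‖ = 1 ∧ r = ‖(inner ℂ (T x) x : ℂ)‖} with hS
  have hwdef : numRadius T = sSup S := rfl
  set w : ℝ := numRadius T with hw
  set c : ℝ := (Phi * starRingEnd ℂ phi).re with hc
  set s : ℝ := ‖Phi + phi‖ with hsdef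
  set d : ℝ := ‖Phi - phi‖ with hddef
  -- s > 0
  have hs : (0:ℝ) < s := by
    rw [hsdef, norm_pos_iff]
    intro hzero
    have hPhi : Phi = -phi := by linear_combination hzero
    rw [hc, hPhi] at hre
    simp only [neg_mul, Complex.neg_re, Complex.mul_re, Complex.conj_re, Complex.conj_im] at hre
    nlinarith [sq_nonneg phi.re, sq_nonneg phi.im]
  have hs2d2 : s^2 - d^2 = 4*c := by
    rw [hsdef, hddef, Complex.sq_norm, Complex.sq_norm, hc]
    simp only [Complex.normSq_apply, Complex.add_re, Complex.add_im, Complex.sub_re,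
      Complex.sub_im, Complex.mul_re, Complex.conj_re, Complex.conj_im]
    ring
  -- bounded above
  have hbdd : BddAbove S := by
    refine ⟨‖T‖, ?_⟩
    rintro r ⟨x, hx, rfl⟩
    calc ‖(inner ℂ (T x) x : ℂ)‖ = ‖(inner ℂ (T x) x : ℂ)‖ := rfl
      _ ≤ ‖T x‖ * ‖x‖ := norm_inner_le_norm _ _
      _ ≤ (‖T‖ * ‖x‖) * ‖x‖ := by gcongr; exact T.le_opNorm x
      _ = ‖T‖ := by rw [hx]; ring
  have hwnn : 0 ≤ w := by
    by_cases hne : ∃ x : H, ‖x‖ = 1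
    · obtain ⟨x, hx⟩ := hne
      have hmem : ‖(inner ℂ (T x) x : ℂ)‖ ∈ S := ⟨x, hx, rfl⟩
      exact le_trans (norm_nonneg _) (le_csSup hbdd hmem)
    · have hemp : S = ∅ := by
        rw [Set.eq_empty_iff_forall_notMem]
        rintro r ⟨x, hx, -⟩
        exact hne ⟨x, hx⟩
      show (0:ℝ) ≤ sSup S
      rw [hemp, Real.sSup_empty]
  -- key pointwise inequality
  have key : ∀ x : H, ‖x‖ = 1 → ‖T x‖^2 + c ≤ s * w := by
    intro x hx
    set p : ℂ := (inner ℂ (T x) x : ℂ) with hp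
    have hx2 : (inner ℂ x x : ℂ) = 1 := by
      rw [inner_self_eq_norm_sq_to_K, hx]; simp
    have hTx : (inner ℂ (T x) (T x) : ℂ) = (‖T x‖:ℂ)^2 := by
      rw [inner_self_eq_norm_sq_to_K]; norm_cast
    have hxp : (inner ℂ x (T x) : ℂ) = starRingEnd ℂ p := by
      rw [hp, inner_conj_symm]
    have hexp : (inner ℂ (Phi • x - T x) (T x - phi • x) : ℂ)
        = starRingEnd ℂ Phi * starRingEnd ℂ p - starRingEnd ℂ Phi * phi
          - (‖T x‖:ℂ)^2 + phi * p := by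
      simp only [inner_sub_left, inner_sub_right, inner_smul_left, inner_smul_right,
        hx2, hTx, hxp]
      ring
    have h0 := h x hx
    rw [hexp] at h0
    have h1 : ‖T x‖^2 + c ≤ ((Phi + phi) * p).re := by
      simp only [Complex.add_re, Complex.sub_re, Complex.mul_re, Complex.conj_re,
        Complex.conj_im, Complex.add_im, Complex.sub_im, Complex.mul_im, Complex.ofReal_re,
        Complex.ofReal_im] at h0 ⊢
      have hre2 : ((‖T x‖:ℂ)^2).re = ‖T x‖^2 := by
        rw [← Complex.ofReal_pow]; exact Complex.ofReal_re _
      rw [hc]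
      simp only [Complex.mul_re, Complex.conj_re, Complex.conj_im]
      nlinarith [h0, hre2]
    have h2 : ((Phi + phi) * p).re ≤ s * ‖p‖ := by
      calc ((Phi + phi) * p).re ≤ ‖(Phi + phi) * p‖ := Complex.re_le_norm _
        _ = s * ‖p‖ := by rw [norm_mul]
    have h3 : ‖p‖ ≤ w := le_csSup hbdd ⟨x, hx, rfl⟩
    calc ‖T x‖^2 + c ≤ s * ‖p‖ := le_trans h1 h2
      _ ≤ s * w := by gcongr
  -- sqrt c
  set sc : ℝ := Real.sqrt c with hscd
  have hsc : sc^2 = c := Real.sq_sqrt hre.le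
  have hscpos : 0 < sc := Real.sqrt_pos.mpr hre
  set M : ℝ := s * w / (2 * sc) with hM
  have hMnn : 0 ≤ M := by positivity
  have hnorm : ‖T‖ ≤ M := by
    refine T.opNorm_le_bound hMnn (fun x => ?_)
    rcases eq_or_ne x 0 with rfl | hx0
    · simp
    · have hxn : (0:ℝ) < ‖x‖ := norm_pos_iff.mpr hx0
      set u : H := (‖x‖⁻¹ : ℂ) • x with hu
      have hun : ‖u‖ = 1 := by
        rw [hu, norm_smul]
        simp [norm_inv, hxn.ne']
      have hTu : ‖T u‖ = ‖x‖⁻¹ * ‖T x‖ := by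
        rw [hu, map_smul, norm_smul]
        simp
      have hk := key u hun
      have h2 : 2 * sc * ‖T u‖ ≤ s * w := by
        nlinarith [sq_nonneg (‖T u‖ - sc)]
      have h3 : ‖T u‖ ≤ M := by
        rw [hM, le_div_iff₀ (by positivity)]
        linarith
      rw [hTu] at h3
      calc ‖T x‖ = (‖x‖⁻¹ * ‖T x‖) * ‖x‖ := by field_simp
        _ ≤ M * ‖x‖ := by gcongr
  -- conclude
  have habs : ‖(Phi - phi) / (Phi + phi)‖ = d / s := by
    rw [norm_div]
  rw [habs]
  have hTnn : 0 ≤ ‖T‖ := norm_nonneg _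
  have h4 : 4 * c * ‖T‖^2 ≤ s^2 * w^2 := by
    have h5 : 2 * sc * ‖T‖ ≤ s * w := by
      rw [hM, le_div_iff₀ (by positivity)] at hnorm
      linarith
    nlinarith [mul_nonneg (mul_nonneg (by norm_num : (0:ℝ) ≤ 2) hscpos.le) hTnn,
      mul_nonneg (mul_nonneg hs.le hwnn) hTnn]
  rw [div_pow, div_mul_eq_mul_div, le_div_iff₀ (by positivity)]
  nlinarith [h4, hs2d2, sq_nonneg ‖T‖]
end

section
/- Let T be a nonzero bounded linear operator on a complex Hilbert space, λ ∈ ℂ nonzero, r > 0 with |λ| > r and ‖T − λI‖ ≤ r. Then ‖T‖² − w(T)² ≤ (2r²/(|λ| + sqrt(|λ|² − r²)))·w(T). -/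
theorem stmt_12 {H : Type*} [NormedAddCommGroup H] [InnerProductSpace ℂ H] [CompleteSpace H]
    (T : H →L[ℂ] H) (hT : T ≠ 0) (lam : ℂ) (hlam : lam ≠ 0) (r : ℝ) (hr : 0 < r)
    (hlr : r < ‖lam‖) (h : ‖T - lam • (1 : H →L[ℂ] H)‖ ≤ r) :
    ‖T‖ ^ 2 - numRadius T ^ 2 ≤
      (2 * r ^ 2 / (‖lam‖ + Real.sqrt (‖lam‖ ^ 2 - r ^ 2))) *
        numRadius T := by
  set a := ‖lam‖ with ha
  set w := numRadius T with hw
  set s := Real.sqrt (a ^ 2 - r ^ 2) with hs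
  have har : (0:ℝ) < a := lt_trans hr hlr
  have hs0 : 0 ≤ s := Real.sqrt_nonneg _
  have hs2 : s ^ 2 = a ^ 2 - r ^ 2 := Real.sq_sqrt (by nlinarith)
  have has : 0 < a + s := by linarith
  -- existence of a unit vector
  obtain ⟨y, hy⟩ : ∃ y : H, T y ≠ 0 := by
    by_contra hc
    push_neg at hc
    exact hT (ContinuousLinearMap.ext fun y => by simp [hc y])
  have hy0 : y ≠ 0 := fun hy0 => hy (by simp [hy0])
  have hyn : (0:ℝ) < ‖y‖ := norm_pos_iff.mpr hy0
  set e : H := ‖y‖⁻¹ • y with he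
  have hee : ‖e‖ = 1 := by
    rw [he, norm_smul, norm_inv, norm_norm, inv_mul_cancel₀ hyn.ne']
  -- the set defining numRadius
  set S : Set ℝ := {t : ℝ | ∃ x : H, ‖x‖ = 1 ∧ t = ‖(inner ℂ (T x) x : ℂ)‖} with hS
  have hbdd : BddAbove S := by
    refine ⟨‖T‖, fun t ht => ?_⟩
    obtain ⟨x, hx1, hx2⟩ := ht
    calc t = ‖(inner ℂ (T x) x : ℂ)‖ := hx2
      _ ≤ ‖T x‖ * ‖x‖ := by
          simpa using norm_inner_le_norm (𝕜 := ℂ) (T x) x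
      _ ≤ (‖T‖ * ‖x‖) * ‖x‖ := by
          exact mul_le_mul_of_nonneg_right (T.le_opNorm x) (norm_nonneg x)
      _ = ‖T‖ := by rw [hx1]; ring
  have hmem : ∀ x : H, ‖x‖ = 1 → ‖(inner ℂ (T x) x : ℂ)‖ ≤ w :=
    fun x hx => le_csSup hbdd ⟨x, hx, rfl⟩
  -- key pointwise bound
  have key : ∀ x : H, ‖x‖ = 1 → ‖T x‖ ^ 2 ≤ r ^ 2 - a ^ 2 + 2 * a * w := by
    intro x hx
    have h1 : ‖T x - lam • x‖ ≤ r := by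
      have := (T - lam • (1 : H →L[ℂ] H)).le_opNorm x
      simp only [ContinuousLinearMap.sub_apply, ContinuousLinearMap.smul_apply,
        ContinuousLinearMap.one_apply, hx, mul_one] at this
      exact this.trans h
    have h2 : ‖T x - lam • x‖ ^ 2 =
        ‖T x‖ ^ 2 - 2 * (inner ℂ (T x) (lam • x) : ℂ).re + ‖lam • x‖ ^ 2 := by
      exact norm_sub_sq (𝕜 := ℂ) (T x) (lam • x)
    have h3 : (inner ℂ (T x) (lam • x) : ℂ) = lam * (inner ℂ (T x) x : ℂ) := by
      rw [inner_smul_right]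
    have h4 : ‖lam • x‖ = a := by rw [norm_smul, hx, mul_one]
    have h5 : (lam * (inner ℂ (T x) x : ℂ)).re ≤ a * ‖(inner ℂ (T x) x : ℂ)‖ := by
      calc (lam * (inner ℂ (T x) x : ℂ)).re ≤ ‖(lam * (inner ℂ (T x) x : ℂ))‖ :=
            Complex.re_le_norm _
        _ = a * ‖(inner ℂ (T x) x : ℂ)‖ := by rw [norm_mul]
    have h6 : ‖(inner ℂ (T x) x : ℂ)‖ ≤ w := hmem x hx
    have h7 : ‖T x - lam • x‖ ^ 2 ≤ r ^ 2 := by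
      have := pow_le_pow_left₀ (norm_nonneg _) h1 2
      exact this
    rw [h2, h3, h4] at h7
    nlinarith
  -- norm bound
  set M : ℝ := r ^ 2 - a ^ 2 + 2 * a * w with hM
  have hM0 : 0 ≤ M := le_trans (sq_nonneg ‖T e‖) (key e hee)
  have hTn : ‖T‖ ≤ Real.sqrt M := by
    refine T.opNorm_le_bound (Real.sqrt_nonneg _) (fun x => ?_)
    rcases eq_or_ne x 0 with rfl | hx0
    · simp
    · have hxn : (0:ℝ) < ‖x‖ := norm_pos_iff.mpr hx0
      have hu : ‖(‖x‖⁻¹ • x : H)‖ = 1 := by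
        rw [norm_smul, norm_inv, norm_norm, inv_mul_cancel₀ hxn.ne']
      have := key (‖x‖⁻¹ • x) hu
      have h2 : ‖T (‖x‖⁻¹ • x)‖ ≤ Real.sqrt M := by
        rw [← Real.sqrt_sq (norm_nonneg (T (‖x‖⁻¹ • x)))]
        exact Real.sqrt_le_sqrt this
      have h3 : T (‖x‖⁻¹ • x) = (‖x‖⁻¹ : ℂ) • T x := by
        rw [← map_smul]
        norm_cast
      rw [h3, norm_smul] at h2
      have : (‖x‖:ℝ) * (‖(‖x‖⁻¹ : ℂ)‖ * ‖T x‖) ≤ ‖x‖ * Real.sqrt M :=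
        mul_le_mul_of_nonneg_left h2 (norm_nonneg x)
      calc ‖T x‖ = ‖x‖ * (‖(‖x‖⁻¹ : ℂ)‖ * ‖T x‖) := by
            simp [norm_inv, abs_of_pos hxn]
            field_simp
        _ ≤ ‖x‖ * Real.sqrt M := this
        _ = Real.sqrt M * ‖x‖ := mul_comm _ _
  have hT2 : ‖T‖ ^ 2 ≤ M := by
    calc ‖T‖ ^ 2 ≤ Real.sqrt M ^ 2 := pow_le_pow_left₀ (norm_nonneg _) hTn 2
      _ = M := Real.sq_sqrt hM0
  -- final algebra
  have hQ : (2 * r ^ 2 * w - (M - w ^ 2) * (a + s)) * (a + s) =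
      ((a + s) * w - (a + s) * a + r ^ 2) ^ 2 := by
    rw [hM]
    linear_combination (-(r ^ 2 : ℝ)) * hs2
  have hD : 0 ≤ 2 * r ^ 2 * w - (M - w ^ 2) * (a + s) := by
    nlinarith [sq_nonneg ((a + s) * w - (a + s) * a + r ^ 2)]
  have halg : M - w ^ 2 ≤ 2 * r ^ 2 / (a + s) * w := by
    rw [div_mul_eq_mul_div, le_div_iff₀ has]
    linarith
  linarith
end

section
/- Let T be a bounded linear operator, λ ∈ ℂ nonzero, r > 0 with |λ| > r, and x a unit vector with ‖Tx − λx‖ ≤ r. Then ‖Tx‖² ≤ |⟨Tx,x⟩|² + 2|⟨Tx,x⟩|·(|λ| − sqrt(|λ|² − r²)). -/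
theorem stmt_13 {H : Type*} [NormedAddCommGroup H] [InnerProductSpace ℂ H] [CompleteSpace H]
    (T : H →L[ℂ] H) (lam : ℂ) (hlam : lam ≠ 0) (r : ℝ) (hr : 0 < r)
    (hlr : r < ‖lam‖) (x : H) (hx : ‖x‖ = 1) (h : ‖T x - lam • x‖ ≤ r) :
    ‖T x‖ ^ 2 ≤ ‖(inner ℂ (T x) x : ℂ)‖ ^ 2 +
      2 * ‖(inner ℂ (T x) x : ℂ)‖ *
        (‖lam‖ - Real.sqrt (‖lam‖ ^ 2 - r ^ 2)) := by
  set a : ℂ := inner ℂ (T x) x with ha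
  set c : ℂ := starRingEnd ℂ a with hc
  set y : H := T x - c • x with hy
  have hxx : (inner ℂ x x : ℂ) = 1 := by
    rw [inner_self_eq_norm_sq_to_K, hx]; norm_num
  have hcc : (starRingEnd ℂ) c = a := by rw [hc, Complex.conj_conj]
  have hyx : (inner ℂ y x : ℂ) = 0 := by
    simp [hy, inner_sub_left, inner_smul_left, hxx, hcc, ← ha, hx]
  have hcx : ∀ d : ℂ, (inner ℂ (d • x) y : ℂ) = 0 := by
    intro d
    rw [inner_smul_left, ← inner_conj_symm, hyx]
    simp
  have pyth : ∀ d : ℂ, ‖d • x + y‖ ^ 2 = ‖d‖ ^ 2 + ‖y‖ ^ 2 := by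
    intro d
    rw [@norm_add_sq ℂ, hcx d]
    simp [norm_smul, hx]
  have hTx : T x = c • x + y := by rw [hy]; abel
  have h1 : ‖T x‖ ^ 2 = ‖c‖ ^ 2 + ‖y‖ ^ 2 := by rw [hTx, pyth]
  have h2 : ‖T x - lam • x‖ ^ 2 = ‖c - lam‖ ^ 2 + ‖y‖ ^ 2 := by
    have : T x - lam • x = (c - lam) • x + y := by rw [hy, sub_smul]; abel
    rw [this, pyth]
  have hac : ‖c‖ = ‖a‖ := by rw [hc, Complex.norm_conj]
  have h3 : ‖c - lam‖ ^ 2 + ‖y‖ ^ 2 ≤ r ^ 2 := by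
    rw [← h2]
    have := norm_nonneg (T x - lam • x)
    nlinarith
  have hlc : ‖lam - c‖ = ‖c - lam‖ := by
    rw [← neg_sub c lam, norm_neg]
  have habs : ‖lam‖ - ‖a‖ ≤ ‖c - lam‖ := by
    have := norm_sub_norm_le lam c
    rw [hlc, hac] at this
    linarith
  have habs2 : ‖a‖ - ‖lam‖ ≤ ‖c - lam‖ := by
    have := norm_sub_norm_le c lam
    rw [hac] at this
    linarith
  have habs0 : 0 ≤ ‖c - lam‖ := norm_nonneg _
  have hd2 : (‖lam‖ - ‖a‖) ^ 2 ≤ ‖c - lam‖ ^ 2 := by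
    nlinarith [mul_nonneg (by linarith : (0:ℝ) ≤ ‖c - lam‖ - (‖lam‖ - ‖a‖)) (by linarith : (0:ℝ) ≤ ‖c - lam‖ + (‖lam‖ - ‖a‖))]
  set s : ℝ := Real.sqrt (‖lam‖ ^ 2 - r ^ 2) with hs
  have hs0 : 0 ≤ s := Real.sqrt_nonneg _
  have hs2 : s ^ 2 = ‖lam‖ ^ 2 - r ^ 2 := by
    rw [hs, Real.sq_sqrt]; nlinarith
  have ht0 : 0 ≤ ‖a‖ := norm_nonneg a
  rw [h1, hac]
  nlinarith [sq_nonneg (‖a‖ - s), hd2, h3, hs2]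
end

section
/- Let φ, Φ ∈ ℂ with Re(Φ·conj(φ)) > 0 and A a bounded linear operator on a complex Hilbert space such that Re⟨Φx − Ax, Ax − φx⟩ ≥ 0 for all unit vectors x. Then ‖A‖² − w(A)² ≤ (|Φ + φ| − 2·sqrt(Re(Φ·conj(φ))))·w(A). -/
theorem stmt_14 {H : Type*} [NormedAddCommGroup H] [InnerProductSpace ℂ H] [CompleteSpace H]
    (A : H →L[ℂ] H) (phi Phi : ℂ) (hre : 0 < (Phi * starRingEnd ℂ phi).re)
    (h : ∀ x : H, ‖x‖ = 1 → 0 ≤ (inner ℂ (Phi • x - A x) (A x - phi • x) : ℂ).re) :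
    ‖A‖ ^ 2 - numRadius A ^ 2 ≤
      (‖Phi + phi‖ - 2 * Real.sqrt (Phi * starRingEnd ℂ phi).re) *
        numRadius A := by
  set S := {r : ℝ | ∃ x : H, ‖x‖ = 1 ∧ r = ‖(inner ℂ (A x) x : ℂ)‖} with hS
  have hw : numRadius A = sSup S := rfl
  set w := sSup S with hwdef
  set r := (Phi * starRingEnd ℂ phi).re with hr
  set M := ‖Phi + phi‖ with hM
  have hbdd : BddAbove S := by
    refine ⟨‖A‖, ?_⟩
    rintro t ⟨x, hx, rfl⟩
    calc ‖(inner ℂ (A x) x : ℂ)‖ ≤ ‖A x‖ * ‖x‖ := by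
          exact norm_inner_le_norm _ _
      _ ≤ ‖A‖ * ‖x‖ * ‖x‖ := by
          have := A.le_opNorm x; nlinarith [norm_nonneg x]
      _ = ‖A‖ := by rw [hx]; ring
  have hw0 : 0 ≤ w := Real.sSup_nonneg (by rintro t ⟨x, hx, rfl⟩; positivity)
  -- key pointwise inequality
  have key : ∀ x : H, ‖x‖ = 1 → ‖A x‖ ^ 2 + r ≤ M * w := by
    intro x hx
    have h0 := h x hx
    set z : ℂ := inner ℂ (A x) x with hz
    have hxx : (inner ℂ x x : ℂ) = 1 := by
      rw [inner_self_eq_norm_sq_to_K, hx]; norm_num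
    have hexp : (inner ℂ (Phi • x - A x) (A x - phi • x) : ℂ) =
        (starRingEnd ℂ) Phi * (starRingEnd ℂ) z - (starRingEnd ℂ) Phi * phi
          - (inner ℂ (A x) (A x) : ℂ) + phi * z := by
      rw [inner_sub_left, inner_sub_right, inner_sub_right, inner_smul_left,
        inner_smul_left, inner_smul_right, inner_smul_right, hxx, ← inner_conj_symm x (A x)]
      rw [hz]; ring
    have hAA : (inner ℂ (A x) (A x) : ℂ).re = ‖A x‖ ^ 2 := by
      rw [inner_self_eq_norm_sq_to_K]; simp [← Complex.ofReal_pow]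
    rw [hexp] at h0
    have hre1 : ((starRingEnd ℂ) Phi * (starRingEnd ℂ) z).re = (Phi * z).re := by
      simp [Complex.mul_re, Complex.conj_re, Complex.conj_im]
    have hre2 : ((starRingEnd ℂ) Phi * phi).re = r := by
      simp [hr, Complex.mul_re, Complex.conj_re, Complex.conj_im]; try ring
    have h1 : ‖A x‖ ^ 2 + r ≤ ((Phi + phi) * z).re := by
      have := h0
      simp only [Complex.add_re, Complex.sub_re, add_mul] at this ⊢
      rw [hre1, hre2, hAA] at this
      linarith
    have h2 : ((Phi + phi) * z).re ≤ M * ‖z‖ := by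
      calc ((Phi + phi) * z).re ≤ ‖(Phi + phi) * z‖ := Complex.re_le_norm _
        _ = M * ‖z‖ := by rw [norm_mul]
    have h3 : ‖z‖ ≤ w := le_csSup hbdd ⟨x, hx, rfl⟩
    have hM0 : (0:ℝ) ≤ M := norm_nonneg _
    nlinarith
  -- operator norm bound
  have hA2 : ‖A‖ ^ 2 ≤ max 0 (M * w - r) := by
    have hC0 : (0:ℝ) ≤ Real.sqrt (max 0 (M * w - r)) := Real.sqrt_nonneg _
    have hAle : ‖A‖ ≤ Real.sqrt (max 0 (M * w - r)) := by
      refine A.opNorm_le_bound hC0 ?_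
      intro x
      rcases eq_or_ne x 0 with rfl | hx0
      · simp
      · have hnx : ‖x‖ ≠ 0 := norm_ne_zero_iff.mpr hx0
        set u : H := (‖x‖⁻¹ : ℂ) • x with hu
        have hun : ‖u‖ = 1 := by
          rw [hu, norm_smul]
          simp [abs_of_nonneg (norm_nonneg x), inv_mul_cancel₀ hnx]
        have hku := key u hun
        have hAu2 : ‖A u‖ ^ 2 ≤ max 0 (M * w - r) := by
          have : ‖A u‖ ^ 2 ≤ M * w - r := by linarith
          exact le_max_of_le_right this
        have hAu : ‖A u‖ ≤ Real.sqrt (max 0 (M * w - r)) := by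
          have := Real.sqrt_le_sqrt hAu2
          rwa [Real.sqrt_sq (norm_nonneg _)] at this
        have hAx : ‖A x‖ = ‖x‖ * ‖A u‖ := by
          rw [hu, map_smul, norm_smul]
          simp only [norm_inv, Complex.norm_real, Real.norm_eq_abs,
            abs_of_nonneg (norm_nonneg x)]
          field_simp
        rw [hAx, mul_comm]
        exact mul_le_mul_of_nonneg_right hAu (norm_nonneg x)
    have := mul_le_mul hAle hAle (norm_nonneg A) hC0
    calc ‖A‖ ^ 2 = ‖A‖ * ‖A‖ := sq ‖A‖
      _ ≤ Real.sqrt (max 0 (M * w - r)) * Real.sqrt (max 0 (M * w - r)) := this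
      _ = max 0 (M * w - r) := Real.mul_self_sqrt (le_max_left _ _)
  -- M ≥ 2√r
  have hs : Real.sqrt r ^ 2 = r := Real.sq_sqrt hre.le
  have hs0 : 0 ≤ Real.sqrt r := Real.sqrt_nonneg r
  have hM2s : 2 * Real.sqrt r ≤ M := by
    have habs : r ≤ ‖Phi‖ * ‖phi‖ := by
      calc r ≤ ‖Phi * starRingEnd ℂ phi‖ := Complex.re_le_norm _
        _ = ‖Phi‖ * ‖phi‖ := by rw [norm_mul, Complex.norm_conj]
    have hMsq : (2 * Real.sqrt r) ^ 2 ≤ M ^ 2 := by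
      have : M ^ 2 = ‖Phi‖ ^ 2 + ‖phi‖ ^ 2 + 2 * r := by
        rw [hM, Complex.sq_norm, Complex.normSq_add, ← Complex.sq_norm, ← Complex.sq_norm, hr]
      nlinarith [sq_nonneg (‖Phi‖ - ‖phi‖)]
    have hM0 : (0:ℝ) ≤ M := norm_nonneg _
    nlinarith
  have hMw0 : 0 ≤ (M - 2 * Real.sqrt r) * w := mul_nonneg (by linarith) hw0
  rw [show numRadius A = w from rfl]
  rcases le_or_gt (M * w - r) 0 with hc | hc
  · have : ‖A‖ ^ 2 ≤ 0 := by
      have := hA2; rw [max_eq_left hc] at this; exact this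
    nlinarith
  · have : ‖A‖ ^ 2 ≤ M * w - r := by
      have := hA2; rwa [max_eq_right hc.le] at this
    nlinarith [sq_nonneg (w - Real.sqrt r)]
end

section
/- Let M ≥ m > 0 and A a bounded linear operator on a complex Hilbert space such that Re⟨Mx − Ax, Ax − mx⟩ ≥ 0 for all unit vectors x. Then ‖A‖ ≤ ((M + m)/(2·sqrt(mM)))·w(A). -/
theorem stmt_15 {H : Type*} [NormedAddCommGroup H] [InnerProductSpace ℂ H] [CompleteSpace H]
    (A : H →L[ℂ] H) (m M : ℝ) (hm : 0 < m) (hmM : m ≤ M)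
    (h : ∀ x : H, ‖x‖ = 1 →
      0 ≤ (inner ℂ ((M : ℂ) • x - A x) (A x - (m : ℂ) • x) : ℂ).re) :
    ‖A‖ ≤ ((M + m) / (2 * Real.sqrt (m * M))) * numRadius A := by
  have hMm : 0 < m * M := mul_pos hm (hm.trans_le hmM)
  have hs : 0 < Real.sqrt (m * M) := Real.sqrt_pos.2 hMm
  have hw0 : 0 ≤ numRadius A := by
    apply Real.sSup_nonneg
    rintro r ⟨x, hx, rfl⟩
    exact norm_nonneg _
  have hc0 : 0 ≤ (M + m) / (2 * Real.sqrt (m * M)) := div_nonneg (by linarith) (by positivity)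
  have bdd : BddAbove {r : ℝ | ∃ x : H, ‖x‖ = 1 ∧ r = ‖(inner ℂ (A x) x : ℂ)‖} := by
    refine ⟨‖A‖, ?_⟩
    rintro r ⟨x, hx, rfl⟩
    calc ‖(inner ℂ (A x) x : ℂ)‖ ≤ ‖A x‖ * ‖x‖ := by
          simpa using norm_inner_le_norm (𝕜 := ℂ) (A x) x
      _ ≤ (‖A‖ * ‖x‖) * ‖x‖ := by
          gcongr
          exact A.le_opNorm x
      _ = ‖A‖ := by rw [hx]; ring
  have key : ∀ x : H, ‖x‖ = 1 →
      ‖A x‖ ≤ ((M + m) / (2 * Real.sqrt (m * M))) * numRadius A := by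
    intro x hx
    have hle : ‖(inner ℂ (A x) x : ℂ)‖ ≤ numRadius A :=
      le_csSup bdd ⟨x, hx, rfl⟩
    have hre : (inner ℂ ((M : ℂ) • x - A x) (A x - (m : ℂ) • x) : ℂ).re
        = (M + m) * (inner ℂ (A x) x : ℂ).re - m * M - ‖A x‖ ^ 2 := by
      have h2 : (inner ℂ x (A x) : ℂ).re = (inner ℂ (A x) x : ℂ).re := by
        rw [← inner_conj_symm]; exact Complex.conj_re _
      simp only [inner_sub_left, inner_sub_right, inner_smul_left, inner_smul_right,
        inner_self_eq_norm_sq_to_K, hx]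
      simp [Complex.sub_re, Complex.add_re, Complex.mul_re, Complex.conj_re,
        Complex.conj_im, h2, ← Complex.ofReal_pow]
      ring
    have h1 : ‖A x‖ ^ 2 + m * M ≤ (M + m) * (inner ℂ (A x) x : ℂ).re := by
      have := h x hx; rw [hre] at this; linarith
    have h2 : (inner ℂ (A x) x : ℂ).re ≤ ‖(inner ℂ (A x) x : ℂ)‖ :=
      Complex.re_le_norm _
    have h3 : 2 * Real.sqrt (m * M) * ‖A x‖ ≤ ‖A x‖ ^ 2 + m * M := by
      nlinarith [sq_nonneg (‖A x‖ - Real.sqrt (m * M)), Real.sq_sqrt hMm.le]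
    have h4 : 2 * Real.sqrt (m * M) * ‖A x‖ ≤ (M + m) * numRadius A := by
      have hMm0 : (0:ℝ) ≤ M + m := by linarith
      calc 2 * Real.sqrt (m * M) * ‖A x‖ ≤ (M + m) * (inner ℂ (A x) x : ℂ).re := by linarith
        _ ≤ (M + m) * ‖(inner ℂ (A x) x : ℂ)‖ := by gcongr
        _ ≤ (M + m) * numRadius A := by gcongr
    rw [div_mul_eq_mul_div, le_div_iff₀ (by positivity)]
    linarith
  refine A.opNorm_le_bound (mul_nonneg hc0 hw0) fun x => ?_
  rcases eq_or_ne x 0 with rfl | hx0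
  · simp
  · have hxn : (0:ℝ) < ‖x‖ := norm_pos_iff.2 hx0
    have hu : ‖(‖x‖⁻¹ : ℂ) • x‖ = 1 := by
      rw [norm_smul]
      simp [hxn.ne']
    have hk := key _ hu
    rw [map_smul, norm_smul] at hk
    have : ‖x‖⁻¹ * ‖A x‖ ≤ ((M + m) / (2 * Real.sqrt (m * M))) * numRadius A := by
      simpa using hk
    calc ‖A x‖ = ‖x‖ * (‖x‖⁻¹ * ‖A x‖) := by field_simp
      _ ≤ ‖x‖ * (((M + m) / (2 * Real.sqrt (m * M))) * numRadius A) := by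
          exact mul_le_mul_of_nonneg_left this hxn.le
      _ = ((M + m) / (2 * Real.sqrt (m * M))) * numRadius A * ‖x‖ := by ring
end

section
/- Let M ≥ m > 0 and A a bounded linear operator on a complex Hilbert space such that Re⟨Mx − Ax, Ax − mx⟩ ≥ 0 for all unit vectors x. Then ‖A‖² − w(A)² ≤ (sqrt(M) − sqrt(m))²·w(A). -/
theorem stmt_16 {H : Type*} [NormedAddCommGroup H] [InnerProductSpace ℂ H] [CompleteSpace H]
    (A : H →L[ℂ] H) (m M : ℝ) (hm : 0 < m) (hmM : m ≤ M)
    (h : ∀ x : H, ‖x‖ = 1 →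
      0 ≤ (inner ℂ ((M : ℂ) • x - A x) (A x - (m : ℂ) • x) : ℂ).re) :
    ‖A‖ ^ 2 - numRadius A ^ 2 ≤ (Real.sqrt M - Real.sqrt m) ^ 2 * numRadius A := by
  set w := numRadius A with hw
  set c := (Real.sqrt M - Real.sqrt m) ^ 2 with hc
  set S := {r : ℝ | ∃ x : H, ‖x‖ = 1 ∧ r = ‖(inner ℂ (A x) x : ℂ)‖} with hS
  have hbdd : BddAbove S := by
    refine ⟨‖A‖, ?_⟩
    rintro r ⟨x, hx, rfl⟩
    calc ‖(inner ℂ (A x) x : ℂ)‖ ≤ ‖A x‖ * ‖x‖ := by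
          simpa using norm_inner_le_norm (𝕜 := ℂ) (A x) x
      _ ≤ ‖A‖ * ‖x‖ * ‖x‖ := by
          gcongr; exact A.le_opNorm x
      _ = ‖A‖ := by rw [hx]; ring
  have hwS : w = sSup S := rfl
  have hw0 : 0 ≤ w := by
    rw [hwS]
    exact Real.sSup_nonneg (by rintro r ⟨x, hx, rfl⟩; positivity)
  have hle : ∀ x : H, ‖x‖ = 1 → ‖(inner ℂ (A x) x : ℂ)‖ ≤ w := by
    intro x hx
    rw [hwS]
    exact le_csSup hbdd ⟨x, hx, rfl⟩
  -- key pointwise inequality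
  have key : ∀ x : H, ‖x‖ = 1 → ‖A x‖ ^ 2 ≤ w ^ 2 + c * w := by
    intro x hx
    have h0 := h x hx
    have hxx : (inner ℂ x x : ℂ) = 1 := by
      rw [inner_self_eq_norm_sq_to_K, hx]; norm_num
    have hAA : (inner ℂ (A x) (A x) : ℂ).re = ‖A x‖ ^ 2 := by
      simpa using inner_self_eq_norm_sq (𝕜 := ℂ) (A x)
    have hsym : (inner ℂ x (A x) : ℂ).re = (inner ℂ (A x) x : ℂ).re := by
      rw [← inner_conj_symm]; exact Complex.conj_re _
    rw [inner_sub_left, inner_sub_right, inner_sub_right, inner_smul_left, inner_smul_right,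
      inner_smul_left, inner_smul_right, hxx] at h0
    simp only [Complex.sub_re, Complex.mul_re, Complex.conj_ofReal, Complex.ofReal_re,
      Complex.ofReal_im, Complex.one_re, Complex.one_im, hAA, hsym, zero_mul, mul_zero,
      sub_zero, mul_one] at h0
    have h1 : ‖A x‖ ^ 2 ≤ (m + M) * (inner ℂ (A x) x : ℂ).re - m * M := by nlinarith [h0]
    have h2 : (inner ℂ (A x) x : ℂ).re ≤ w := by
      calc (inner ℂ (A x) x : ℂ).re ≤ ‖(inner ℂ (A x) x : ℂ)‖ := Complex.re_le_norm _
        _ ≤ w := hle x hx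
    have hsm : Real.sqrt m ^ 2 = m := Real.sq_sqrt hm.le
    have hsM : Real.sqrt M ^ 2 = M := Real.sq_sqrt (hm.le.trans hmM)
    have hcw : (m + M) * w - m * M ≤ w ^ 2 + c * w := by
      have := sq_nonneg (w - Real.sqrt m * Real.sqrt M)
      nlinarith [this, hsm, hsM]
    nlinarith [h1, h2, hm.le.trans hmM, hm.le]
  -- norm bound
  have hc0 : 0 ≤ c := sq_nonneg _
  have hB0 : 0 ≤ w ^ 2 + c * w := by positivity
  have hnorm : ‖A‖ ≤ Real.sqrt (w ^ 2 + c * w) := by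
    refine A.opNorm_le_bound (Real.sqrt_nonneg _) (fun x => ?_)
    rcases eq_or_ne x 0 with rfl | hx0
    · simp
    · have hnx : ‖x‖ ≠ 0 := norm_ne_zero_iff.mpr hx0
      set y := (‖x‖ : ℂ)⁻¹ • x with hy
      have hy1 : ‖y‖ = 1 := by
        rw [hy, norm_smul]
        simp [norm_inv, hnx]
      have hAy : ‖A y‖ ^ 2 ≤ w ^ 2 + c * w := key y hy1
      have hAyle : ‖A y‖ ≤ Real.sqrt (w ^ 2 + c * w) := by
        rw [← Real.sqrt_sq (norm_nonneg (A y))]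
        exact Real.sqrt_le_sqrt hAy
      have hAx : A x = (‖x‖ : ℂ) • A y := by
        rw [hy, map_smul, smul_smul]
        rw [mul_inv_cancel₀ (by exact_mod_cast hnx), one_smul]
      rw [hAx, norm_smul, Complex.norm_real, Real.norm_eq_abs, abs_norm]
      exact (mul_le_mul_of_nonneg_left hAyle (norm_nonneg x)).trans_eq (mul_comm _ _)
  have : ‖A‖ ^ 2 ≤ w ^ 2 + c * w := by
    calc ‖A‖ ^ 2 ≤ Real.sqrt (w ^ 2 + c * w) ^ 2 :=
          pow_le_pow_left₀ (norm_nonneg _) hnorm 2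
      _ = w ^ 2 + c * w := Real.sq_sqrt hB0
  linarith
end

section
/- Let M ≥ m > 0 and A a bounded linear operator on a complex Hilbert space such that Re⟨Mx − Ax, Ax − mx⟩ ≥ 0 for all unit vectors x. Then ‖A‖ − w(A) ≤ (M − m)²/(4(M + m)). -/
theorem stmt_17 {H : Type*} [NormedAddCommGroup H] [InnerProductSpace ℂ H] [CompleteSpace H]
    (A : H →L[ℂ] H) (m M : ℝ) (hm : 0 < m) (hmM : m ≤ M)
    (h : ∀ x : H, ‖x‖ = 1 →
      0 ≤ (inner ℂ ((M : ℂ) • x - A x) (A x - (m : ℂ) • x) : ℂ).re) :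
    ‖A‖ - numRadius A ≤ (M - m) ^ 2 / (4 * (M + m)) := by
  have hMm : (0:ℝ) < M + m := by linarith
  set C : ℝ := (M - m) ^ 2 / (4 * (M + m)) with hC
  have hC0 : 0 ≤ C := div_nonneg (sq_nonneg _) (by linarith)
  -- pointwise bound for unit vectors
  have key : ∀ x : H, ‖x‖ = 1 → ‖A x‖ ≤ ‖(inner ℂ (A x) x : ℂ)‖ + C := by
    intro x hx
    have h0 := h x hx
    have hexp : (inner ℂ ((M : ℂ) • x - A x) (A x - (m : ℂ) • x) : ℂ).re
        = (M + m) * (inner ℂ (A x) x : ℂ).re - ‖A x‖ ^ 2 - M * m := by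
      have h1 : (inner ℂ x (A x) : ℂ).re = (inner ℂ (A x) x : ℂ).re := by
        rw [← inner_conj_symm x (A x), Complex.conj_re]
      have h2 : (inner ℂ x x : ℂ) = 1 := by
        rw [inner_self_eq_norm_sq_to_K, hx]; norm_num
      have h3 : (inner ℂ (A x) (A x) : ℂ) = (‖A x‖ : ℂ) ^ 2 := inner_self_eq_norm_sq_to_K _
      simp only [inner_sub_left, inner_sub_right, inner_smul_left, inner_smul_right, h2, h3,
        Complex.sub_re, Complex.add_re, Complex.mul_re, Complex.conj_re, Complex.conj_im,
        Complex.ofReal_re, Complex.ofReal_im, mul_one, ← Complex.ofReal_pow]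
      simp [h1]
      ring
    rw [hexp] at h0
    have hre : (inner ℂ (A x) x : ℂ).re ≤ ‖(inner ℂ (A x) x : ℂ)‖ :=
      Complex.re_le_norm _
    set r := ‖(inner ℂ (A x) x : ℂ)‖ with hr
    have hkey : ‖A x‖ ^ 2 + M * m ≤ (M + m) * r := by nlinarith
    rw [← sub_le_iff_le_add', hC, le_div_iff₀ (by linarith : (0:ℝ) < 4 * (M + m))]
    nlinarith [sq_nonneg (2 * ‖A x‖ - (M + m))]
  -- numRadius basics
  set S : Set ℝ := {r : ℝ | ∃ x : H, ‖x‖ = 1 ∧ r = ‖(inner ℂ (A x) x : ℂ)‖} with hS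
  have hbdd : BddAbove S := by
    refine ⟨‖A‖, ?_⟩
    rintro r ⟨x, hx, rfl⟩
    calc ‖(inner ℂ (A x) x : ℂ)‖ = ‖(inner ℂ (A x) x : ℂ)‖ := rfl
      _ ≤ ‖A x‖ * ‖x‖ := norm_inner_le_norm _ _
      _ ≤ (‖A‖ * ‖x‖) * ‖x‖ := by
          gcongr; exact A.le_opNorm x
      _ = ‖A‖ := by rw [hx]; ring
  have hmem : ∀ x : H, ‖x‖ = 1 → ‖(inner ℂ (A x) x : ℂ)‖ ≤ numRadius A := by
    intro x hx
    exact le_csSup hbdd ⟨x, hx, rfl⟩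
  have hnonneg : 0 ≤ numRadius A := by
    apply Real.sSup_nonneg
    rintro r ⟨x, hx, rfl⟩
    exact norm_nonneg _
  -- operator norm bound
  have hop : ‖A‖ ≤ numRadius A + C := by
    refine A.opNorm_le_bound (by linarith) (fun x => ?_)
    by_cases hx0 : x = 0
    · simp [hx0]
    · have hxn : (0:ℝ) < ‖x‖ := norm_pos_iff.mpr hx0
      set u : H := ((‖x‖ : ℂ))⁻¹ • x with hu
      have hun : ‖u‖ = 1 := by
        rw [hu, norm_smul]
        simp [norm_inv, Complex.norm_real, abs_of_pos hxn,
          inv_mul_cancel₀ (ne_of_gt hxn)]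
      have hAu : A u = ((‖x‖ : ℂ))⁻¹ • A x := by rw [hu, map_smul]
      have h1 : ‖A u‖ ≤ numRadius A + C :=
        le_trans (key u hun) (by linarith [hmem u hun])
      have h2 : ‖A u‖ = ‖x‖⁻¹ * ‖A x‖ := by
        rw [hAu, norm_smul]
        simp [norm_inv, Complex.norm_real, abs_of_pos hxn]
      rw [h2] at h1
      calc ‖A x‖ = (‖x‖⁻¹ * ‖A x‖) * ‖x‖ := by field_simp
        _ ≤ (numRadius A + C) * ‖x‖ := by
            apply mul_le_mul_of_nonneg_right h1 (le_of_lt hxn)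
  linarith
end

section
/- If T is a bounded linear operator on a complex Hilbert space with range of T orthogonal to range of T* (i.e., ⟨Tf, T*g⟩ = 0 for all f, g ∈ H), then w(T) = ‖T‖/2. -/
theorem stmt_18 {H : Type*} [NormedAddCommGroup H] [InnerProductSpace ℂ H] [CompleteSpace H]
    (T : H →L[ℂ] H)
    (h : ∀ f g : H, (inner ℂ (T f) (ContinuousLinearMap.adjoint T g) : ℂ) = 0) :
    numRadius T = ‖T‖ / 2 := by
  classical
  -- T² = 0
  have hT2 : ∀ f : H, T (T f) = 0 := by
    intro f
    have h0 := h f (T (T f))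
    rw [ContinuousLinearMap.adjoint_inner_right] at h0
    exact inner_self_eq_zero.mp h0
  have hKer : ∀ f : H, T f ∈ (LinearMap.ker (T : H →ₗ[ℂ] H))ᗮᗮ → True := fun _ _ => trivial
  set K : Submodule ℂ H := LinearMap.ker (T : H →ₗ[ℂ] H) with hKdef
  haveI : CompleteSpace K := (ContinuousLinearMap.isClosed_ker T).completeSpace_coe
  have hmemK : ∀ f : H, T f = 0 → f ∈ K := by
    intro f hf
    simp only [hKdef, LinearMap.mem_ker, ContinuousLinearMap.coe_coe]
    exact hf
  have hKzero : ∀ f : H, f ∈ K → T f = 0 := by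
    intro f hf
    simpa only [hKdef, LinearMap.mem_ker, ContinuousLinearMap.coe_coe] using hf
  set S : Set ℝ := {r : ℝ | ∃ x : H, ‖x‖ = 1 ∧ r = ‖(inner ℂ (T x) x : ℂ)‖} with hSdef
  -- Upper bound for each element
  have upper : ∀ x : H, ‖x‖ = 1 → ‖(inner ℂ (T x) x : ℂ)‖ ≤ ‖T‖ / 2 := by
    intro x hx
    obtain ⟨u, hu_def⟩ : ∃ u : H, u = (K.orthogonalProjectionOnto x : H) := ⟨_, rfl⟩
    obtain ⟨v, hv_def⟩ : ∃ v : H, v = x - u := ⟨_, rfl⟩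
    have hu : u ∈ K := hu_def ▸ (K.orthogonalProjectionOnto x).2
    have hv : v ∈ Kᗮ := by
      rw [hv_def, hu_def]
      exact Submodule.sub_starProjection_mem_orthogonal (K := K) x
    have hTx : T x ∈ K := hmemK _ (hT2 x)
    have hx_eq : x = u + v := by rw [hv_def]; abel
    have hov : (inner ℂ (T x) v : ℂ) = 0 :=
      Submodule.inner_right_of_mem_orthogonal hTx hv
    have huv : (inner ℂ u v : ℂ) = 0 :=
      Submodule.inner_right_of_mem_orthogonal hu hv
    have hsum : ‖u‖ ^ 2 + ‖v‖ ^ 2 = 1 := by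
      have hns := norm_add_sq (𝕜 := ℂ) u v
      rw [← hx_eq, hx, huv] at hns
      simp at hns
      linarith
    have hinner : (inner ℂ (T x) x : ℂ) = inner ℂ (T x) u := by
      have h1 : (inner ℂ (T x) (u + v) : ℂ) = inner ℂ (T x) u := by
        rw [inner_add_right, hov, add_zero]
      rw [← hx_eq] at h1
      exact h1
    have hTxv : T x = T v := by
      rw [hx_eq, map_add, hKzero u hu, zero_add]
    have hb : ‖(inner ℂ (T x) u : ℂ)‖ ≤ ‖T‖ * ‖v‖ * ‖u‖ := by
      calc ‖(inner ℂ (T x) u : ℂ)‖ ≤ ‖T x‖ * ‖u‖ := norm_inner_le_norm _ _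
        _ = ‖T v‖ * ‖u‖ := by rw [hTxv]
        _ ≤ (‖T‖ * ‖v‖) * ‖u‖ :=
            mul_le_mul_of_nonneg_right (T.le_opNorm v) (norm_nonneg u)
        _ = ‖T‖ * ‖v‖ * ‖u‖ := by ring
    rw [hinner]
    nlinarith [norm_nonneg u, norm_nonneg v, norm_nonneg T, sq_nonneg (‖u‖ - ‖v‖)]
  have hbdd : BddAbove S := by
    refine ⟨‖T‖ / 2, ?_⟩
    rintro r ⟨x, hx, rfl⟩
    exact upper x hx
  by_cases hT0 : T = 0
  · -- trivial case
    subst hT0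
    have hnum : numRadius (0 : H →L[ℂ] H) =
        sSup {r : ℝ | ∃ x : H, ‖x‖ = 1 ∧ r = ‖(inner ℂ ((0 : H →L[ℂ] H) x) x : ℂ)‖} := rfl
    rcases subsingleton_or_nontrivial H with hs | hs
    · have hset : {r : ℝ | ∃ x : H, ‖x‖ = 1 ∧
          r = ‖(inner ℂ ((0 : H →L[ℂ] H) x) x : ℂ)‖} = ∅ := by
        ext r
        simp only [Set.mem_setOf_eq, Set.mem_empty_iff_false, iff_false]
        rintro ⟨x, hx1, -⟩
        rw [Subsingleton.elim x 0, norm_zero] at hx1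
        norm_num at hx1
      rw [hnum, hset, Real.sSup_empty]
      simp
    · obtain ⟨x, hx⟩ := exists_ne (0 : H)
      have hxu : ‖(‖x‖⁻¹ • x : H)‖ = 1 := by
        rw [norm_smul, norm_inv, norm_norm, inv_mul_cancel₀ (norm_ne_zero_iff.mpr hx)]
      have hset : {r : ℝ | ∃ x : H, ‖x‖ = 1 ∧
          r = ‖(inner ℂ ((0 : H →L[ℂ] H) x) x : ℂ)‖} = {0} := by
        ext r
        simp only [Set.mem_setOf_eq, Set.mem_singleton_iff]
        constructor
        · rintro ⟨y, -, rfl⟩; simp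
        · rintro rfl; exact ⟨‖x‖⁻¹ • x, hxu, by simp⟩
      rw [hnum, hset, csSup_singleton]
      simp
  · -- nontrivial case
    have hTpos : 0 < ‖T‖ := norm_pos_iff.mpr hT0
    -- lower bound: elements of S arbitrarily close to ‖T‖/2
    have lower : ∀ ε : ℝ, 0 < ε → ∃ r ∈ S, ‖T‖ / 2 - ε < r := by
      intro ε hε
      obtain ⟨δ, hδdef⟩ : ∃ δ : ℝ, δ = min ε (‖T‖ / 2) := ⟨_, rfl⟩
      have hδpos : 0 < δ := hδdef ▸ lt_min hε (by linarith)
      have hδε : δ ≤ ε := hδdef ▸ min_le_left _ _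
      have hδT : δ ≤ ‖T‖ / 2 := hδdef ▸ min_le_right _ _
      -- find y with ‖T y‖ > (‖T‖ - δ) ‖y‖
      obtain ⟨y, hy⟩ : ∃ y : H, (‖T‖ - δ) * ‖y‖ < ‖T y‖ := by
        by_contra hc
        push_neg at hc
        have : ‖T‖ ≤ ‖T‖ - δ :=
          T.opNorm_le_bound (by linarith) (fun y => hc y)
        linarith
      have hy0 : y ≠ 0 := by
        rintro rfl
        rw [norm_zero, mul_zero, map_zero, norm_zero] at hy
        exact lt_irrefl 0 hy
      obtain ⟨y', hy'def⟩ : ∃ y' : H, y' = ((‖y‖ : ℂ))⁻¹ • y := ⟨_, rfl⟩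
      have hyn : (0 : ℝ) < ‖y‖ := norm_pos_iff.mpr hy0
      have hy'norm : ‖y'‖ = 1 := by
        rw [hy'def, norm_smul, norm_inv, Complex.norm_real, Real.norm_eq_abs,
          abs_of_pos hyn, inv_mul_cancel₀ (ne_of_gt hyn)]
      have hTy' : ‖T‖ - δ < ‖T y'‖ := by
        rw [hy'def, map_smul, norm_smul, norm_inv, Complex.norm_real, Real.norm_eq_abs,
          abs_of_pos hyn, inv_mul_eq_div, lt_div_iff₀ hyn]
        linarith [hy]
      obtain ⟨v, hvdef⟩ : ∃ v : H, v = y' - (K.orthogonalProjectionOnto y' : H) := ⟨_, rfl⟩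
      have hvK : v ∈ Kᗮ := by rw [hvdef]; exact Submodule.sub_starProjection_mem_orthogonal (K := K) y'
      have hTv : T v = T y' := by
        rw [hvdef, map_sub, hKzero _ (K.orthogonalProjectionOnto y').2, sub_zero]
      have hTvpos : 0 < ‖T v‖ := by rw [hTv]; linarith
      have hv0 : v ≠ 0 := by
        intro h0
        rw [h0, map_zero, norm_zero] at hTvpos
        exact lt_irrefl 0 hTvpos
      have hvn : (0 : ℝ) < ‖v‖ := norm_pos_iff.mpr hv0
      have hvle : ‖v‖ ≤ 1 := by
        have hu : (K.orthogonalProjectionOnto y' : H) ∈ K := (K.orthogonalProjectionOnto y').2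
        have huv : (inner ℂ ((K.orthogonalProjectionOnto y' : H)) v : ℂ) = 0 :=
          Submodule.inner_right_of_mem_orthogonal hu hvK
        have hye : y' = (K.orthogonalProjectionOnto y' : H) + v := by rw [hvdef]; abel
        have hns := norm_add_sq (𝕜 := ℂ) ((K.orthogonalProjectionOnto y' : H)) v
        rw [← hye, hy'norm, huv] at hns
        simp at hns
        nlinarith [norm_nonneg ((K.orthogonalProjectionOnto y' : H)), norm_nonneg v]
      obtain ⟨v', hv'def⟩ : ∃ v' : H, v' = ((‖v‖ : ℂ))⁻¹ • v := ⟨_, rfl⟩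
      have hv'norm : ‖v'‖ = 1 := by
        rw [hv'def, norm_smul, norm_inv, Complex.norm_real, Real.norm_eq_abs,
          abs_of_pos hvn, inv_mul_cancel₀ (ne_of_gt hvn)]
      have hv'K : v' ∈ Kᗮ := hv'def ▸ Kᗮ.smul_mem _ hvK
      have hTv' : ‖T‖ - δ < ‖T v'‖ := by
        rw [hv'def, map_smul, norm_smul, norm_inv, Complex.norm_real, Real.norm_eq_abs,
          abs_of_pos hvn, hTv]
        have h1 : (1 : ℝ) ≤ ‖v‖⁻¹ := (one_le_inv₀ hvn).mpr hvle
        calc ‖T‖ - δ < ‖T y'‖ := hTy'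
          _ = 1 * ‖T y'‖ := (one_mul _).symm
          _ ≤ ‖v‖⁻¹ * ‖T y'‖ := mul_le_mul_of_nonneg_right h1 (norm_nonneg _)
      obtain ⟨w, hwdef⟩ : ∃ w : H, w = T v' := ⟨_, rfl⟩
      obtain ⟨c, hcdef⟩ : ∃ c : ℝ, c = ‖w‖ := ⟨_, rfl⟩
      have hcpos : 0 < c := by rw [hcdef, hwdef]; linarith [hTv']
      have hwK : w ∈ K := by
        apply hmemK
        rw [hwdef, hv'def, map_smul, map_smul, hT2]
        simp
      have hwv' : (inner ℂ w v' : ℂ) = 0 :=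
        Submodule.inner_right_of_mem_orthogonal hwK hv'K
      have hv'w : (inner ℂ v' w : ℂ) = 0 := by
        rw [inner_eq_zero_symm]; exact hwv'
      obtain ⟨z, hzdef⟩ : ∃ z : H, z = v' + ((c : ℂ))⁻¹ • w := ⟨_, rfl⟩
      have hcw : ‖((c : ℂ))⁻¹ • w‖ = 1 := by
        rw [norm_smul, norm_inv, Complex.norm_real, Real.norm_eq_abs, abs_of_pos hcpos,
          ← hcdef, inv_mul_cancel₀ (ne_of_gt hcpos)]
      have hzsq : ‖z‖ ^ 2 = 2 := by
        have hinner0 : (inner ℂ v' (((c : ℂ))⁻¹ • w) : ℂ) = 0 := by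
          rw [inner_smul_right, hv'w, mul_zero]
        have hns := norm_add_sq (𝕜 := ℂ) v' (((c : ℂ))⁻¹ • w)
        rw [← hzdef, hinner0, hv'norm, hcw] at hns
        simp at hns
        linarith
      have hznorm : ‖z‖ = Real.sqrt 2 := by
        rw [← hzsq, Real.sqrt_sq (norm_nonneg z)]
      obtain ⟨a, hadef⟩ : ∃ a : ℂ, a = ((Real.sqrt 2 : ℝ) : ℂ)⁻¹ := ⟨_, rfl⟩
      obtain ⟨x, hxdef⟩ : ∃ x : H, x = a • z := ⟨_, rfl⟩
      have hsqrt2 : (0 : ℝ) < Real.sqrt 2 := Real.sqrt_pos.mpr (by norm_num)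
      have hxnorm : ‖x‖ = 1 := by
        rw [hxdef, norm_smul, hadef, norm_inv, Complex.norm_real, Real.norm_eq_abs,
          abs_of_pos hsqrt2, hznorm, inv_mul_cancel₀ (ne_of_gt hsqrt2)]
      have hTz : T z = w := by
        rw [hzdef, map_add, map_smul, hKzero w hwK, smul_zero, add_zero, ← hwdef]
      have hinnerz : (inner ℂ (T z) z : ℂ) = (c : ℂ) := by
        rw [hTz, hzdef, inner_add_right, hwv', zero_add, inner_smul_right,
          inner_self_eq_norm_sq_to_K, ← hcdef]
        have hc0 : (c : ℂ) ≠ 0 := by exact_mod_cast ne_of_gt hcpos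
        field_simp
        rfl
      have hinnerx : (inner ℂ (T x) x : ℂ) = (c : ℂ) / 2 := by
        rw [hxdef, map_smul, inner_smul_left, inner_smul_right, hinnerz]
        have ha : (starRingEnd ℂ) a = a := by
          rw [hadef, ← Complex.ofReal_inv, Complex.conj_ofReal]
        have haa : a * a = (2 : ℂ)⁻¹ := by
          rw [hadef, ← Complex.ofReal_inv, ← Complex.ofReal_mul, ← mul_inv,
            Real.mul_self_sqrt (by norm_num : (0:ℝ) ≤ 2)]
          norm_num
        rw [ha, ← mul_assoc, haa]
        ring
      refine ⟨c / 2, ⟨x, hxnorm, ?_⟩, ?_⟩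
      · rw [hinnerx, norm_div]
        simp [abs_of_pos hcpos]
      · have hcc : ‖T‖ - δ < c := by rw [hcdef, hwdef]; exact hTv'
        linarith
    -- assemble
    have hne : S.Nonempty := by
      obtain ⟨r, hr, -⟩ := lower 1 one_pos
      exact ⟨r, hr⟩
    have h1 : sSup S ≤ ‖T‖ / 2 := by
      apply csSup_le hne
      rintro r ⟨x, hx, rfl⟩
      exact upper x hx
    have h2 : ‖T‖ / 2 ≤ sSup S := by
      apply le_of_forall_sub_le
      intro ε hε
      obtain ⟨r, hr, hrlt⟩ := lower ε hε
      exact le_trans (le_of_lt hrlt) (le_csSup hbdd hr)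
    have hfin : numRadius T = sSup S := rfl
    rw [hfin]
    linarith
end

section
/- Let φ, Φ ∈ ℂ with Φ ≠ −φ, Φ ≠ φ, and A a bounded linear operator on a complex Hilbert space such that (A* − conj(φ)I)(ΦI − A) is self-adjoint and positive (≥ 0 in the operator order). Then ‖A‖ − w(A) ≤ |Φ − φ|²/(4|Φ + φ|). -/
theorem stmt_19 {H : Type*} [NormedAddCommGroup H] [InnerProductSpace ℂ H] [CompleteSpace H]
    (A : H →L[ℂ] H) (phi Phi : ℂ) (h1 : Phi ≠ -phi) (h2 : Phi ≠ phi)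
    (hsa : IsSelfAdjoint ((ContinuousLinearMap.adjoint A - starRingEnd ℂ phi • (1 : H →L[ℂ] H)) ∘L
      (Phi • (1 : H →L[ℂ] H) - A)))
    (hpos : ∀ x : H,
      0 ≤ (inner ℂ (((ContinuousLinearMap.adjoint A - starRingEnd ℂ phi • (1 : H →L[ℂ] H)) ∘L
        (Phi • (1 : H →L[ℂ] H) - A)) x) x : ℂ).re) :
    ‖A‖ - numRadius A ≤ ‖Phi - phi‖ ^ 2 / (4 * ‖Phi + phi‖) := by
  set c : ℝ := ‖Phi + phi‖ with hc
  set d : ℝ := (starRingEnd ℂ phi * Phi).re with hd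
  have hne : Phi + phi ≠ 0 := by
    intro h; exact h1 (by linear_combination h)
  have hcpos : 0 < c := by simpa [hc] using (norm_pos_iff.mpr hne)
  have habs : ‖Phi - phi‖ ^ 2 = c ^ 2 - 4 * d := by
    rw [hc, hd, Complex.sq_norm, Complex.sq_norm]
    simp only [Complex.normSq_apply, Complex.mul_re, Complex.conj_re, Complex.conj_im,
      Complex.add_re, Complex.add_im, Complex.sub_re, Complex.sub_im]
    ring
  -- key pointwise inequality
  have key : ∀ x : H, ‖x‖ = 1 → ‖A x‖ ^ 2 + d ≤ c * ‖(inner ℂ (A x) x : ℂ)‖ := by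
    intro x hx
    have h0 := hpos x
    have hadj : ContinuousLinearMap.adjoint A - starRingEnd ℂ phi • (1 : H →L[ℂ] H)
        = ContinuousLinearMap.adjoint (A - phi • (1 : H →L[ℂ] H)) := by
      simp [← ContinuousLinearMap.star_eq_adjoint, star_smul]
    rw [ContinuousLinearMap.comp_apply, hadj, ContinuousLinearMap.adjoint_inner_left] at h0
    have hexp : (inner ℂ ((Phi • (1 : H →L[ℂ] H) - A) x) ((A - phi • (1 : H →L[ℂ] H)) x) : ℂ).re
        = ((Phi + phi) * inner ℂ (A x) x).re - ‖A x‖ ^ 2 - d := by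
      rw [hd]
      have hx2 : (inner ℂ x x : ℂ) = 1 := by
        rw [inner_self_eq_norm_sq_to_K, hx]; norm_num
      have hAx : (inner ℂ (A x) (A x) : ℂ) = (‖A x‖ : ℂ) ^ 2 := inner_self_eq_norm_sq_to_K _
      simp only [ContinuousLinearMap.sub_apply, ContinuousLinearMap.smul_apply,
        ContinuousLinearMap.one_apply, inner_sub_left, inner_sub_right,
        inner_smul_left, inner_smul_right, hx2, hAx, mul_one]
      rw [← inner_conj_symm x (A x)]
      set z : ℂ := inner ℂ (A x) x
      simp [Complex.add_re, Complex.sub_re, Complex.mul_re, Complex.conj_re, Complex.conj_im,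
        ← Complex.ofReal_pow]
      ring
    rw [hexp] at h0
    have hre : ((Phi + phi) * inner ℂ (A x) x).re ≤ c * ‖(inner ℂ (A x) x : ℂ)‖ := by
      calc ((Phi + phi) * inner ℂ (A x) x).re ≤ ‖(Phi + phi) * inner ℂ (A x) x‖ :=
            Complex.re_le_norm _
        _ = c * ‖(inner ℂ (A x) x : ℂ)‖ := by rw [norm_mul]
    linarith
  -- boundedness of the numerical range set
  have hbdd : BddAbove {r : ℝ | ∃ x : H, ‖x‖ = 1 ∧ r = ‖(inner ℂ (A x) x : ℂ)‖} := by
    refine ⟨‖A‖, ?_⟩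
    rintro r ⟨x, hx, rfl⟩
    calc ‖(inner ℂ (A x) x : ℂ)‖ ≤ ‖A x‖ * ‖x‖ := by
          simpa using norm_inner_le_norm (𝕜 := ℂ) (A x) x
      _ ≤ ‖A‖ * ‖x‖ * ‖x‖ := by
          have := A.le_opNorm x
          nlinarith [norm_nonneg x]
      _ = ‖A‖ := by rw [hx]; ring
  have hw : ∀ x : H, ‖x‖ = 1 → ‖(inner ℂ (A x) x : ℂ)‖ ≤ numRadius A := by
    intro x hx
    exact le_csSup hbdd ⟨x, hx, rfl⟩
  by_cases hH : ∃ x0 : H, ‖x0‖ = 1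
  · obtain ⟨x0, hx0⟩ := hH
    set w : ℝ := numRadius A with hwdef
    have hcw : 0 ≤ c * w - d := by
      have h1' := key x0 hx0
      have h2' := hw x0 hx0
      nlinarith [sq_nonneg ‖A x0‖, hcpos.le]
    have hnorm : ‖A‖ ^ 2 ≤ c * w - d := by
      have hA : ‖A‖ ≤ Real.sqrt (c * w - d) := by
        refine A.opNorm_le_bound (Real.sqrt_nonneg _) (fun x => ?_)
        rcases eq_or_ne x 0 with rfl | hx0'
        · simp
        · have hxn : ‖x‖ ≠ 0 := norm_ne_zero_iff.mpr hx0'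
          set u : H := ((‖x‖⁻¹ : ℝ) : ℂ) • x with hu
          have hun : ‖u‖ = 1 := by
            rw [hu, norm_smul, Complex.norm_real, Real.norm_eq_abs,
              abs_of_nonneg (inv_nonneg.mpr (norm_nonneg x)), inv_mul_cancel₀ hxn]
          have h1' := key u hun
          have h2' := hw u hun
          have hAu : ‖A u‖ ^ 2 ≤ c * w - d := by nlinarith [hcpos.le]
          have hAu' : ‖A u‖ ≤ Real.sqrt (c * w - d) := by
            rw [← Real.sqrt_sq (norm_nonneg (A u))]
            exact Real.sqrt_le_sqrt hAu
          have hAx : A x = ((‖x‖ : ℝ) : ℂ) • A u := by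
            rw [hu, map_smul, smul_smul, ← Complex.ofReal_mul, mul_inv_cancel₀ hxn]
            simp
          rw [hAx, norm_smul, Complex.norm_real, Real.norm_eq_abs, abs_of_nonneg (norm_nonneg x),
            mul_comm]
          exact mul_le_mul_of_nonneg_right hAu' (norm_nonneg x)
      nlinarith [norm_nonneg A, Real.sqrt_nonneg (c * w - d), Real.sq_sqrt hcw]
    rw [habs, le_div_iff₀ (by linarith : (0:ℝ) < 4 * c)]
    nlinarith [sq_nonneg (c - 2 * ‖A‖)]
  · have hA0 : ‖A‖ = 0 := by
      have hall : ∀ x : H, x = 0 := by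
        intro x
        by_contra hx
        refine hH ⟨((‖x‖⁻¹ : ℝ) : ℂ) • x, ?_⟩
        rw [norm_smul, Complex.norm_real, Real.norm_eq_abs,
          abs_of_nonneg (inv_nonneg.mpr (norm_nonneg x)),
          inv_mul_cancel₀ (norm_ne_zero_iff.mpr hx)]
      have : A = 0 := by ext x; rw [hall (A x)]; rfl
      simp [this]
    have hset : {r : ℝ | ∃ x : H, ‖x‖ = 1 ∧ r = ‖(inner ℂ (A x) x : ℂ)‖} = ∅ := by
      ext r; simp only [Set.mem_setOf_eq, Set.mem_empty_iff_false, iff_false]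
      rintro ⟨x, hx, -⟩; exact hH ⟨x, hx⟩
    have hw0 : numRadius A = 0 := by rw [numRadius, hset, Real.sSup_empty]
    rw [hA0, hw0, sub_zero]
    exact div_nonneg (by positivity) (by linarith)
end
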